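/- arXiv:2211.07212 — 6 statements merged into one kernel-verified Lean document; each statement's English description precedes it below -/
import Mathlib

section
/- Let b ∈ Δ_d^{>0}, let R : ℝ₊^d → ℝ be continuous on ℝ₊^d, continuously differentiable on (ℝ₊*)^d, convex, positively homogeneous of degree 1, and positive on the simplex, and let g : ℝ₊ → ℝ be C¹, convex and increasing. Then the function Γ_g(y) = g(R(y)) − Σᵢ bᵢ log yᵢ attains its minimum over (ℝ₊*)^d at a unique point y*. -/
open Finset Set Real

section Aux

variable {d : ℕ}

/-- midpoint log inequality -/
lemma log_mid_le {x y : ℝ} (hx : 0 < x) (hy : 0 < y) :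
    (Real.log x + Real.log y) / 2 ≤ Real.log ((x + y) / 2) := by
  have h := strictConcaveOn_log_Ioi.concaveOn.2 (Set.mem_Ioi.2 hx) (Set.mem_Ioi.2 hy)
    (by norm_num : (0:ℝ) ≤ 1/2) (by norm_num : (0:ℝ) ≤ 1/2) (by norm_num)
  simp only [smul_eq_mul] at h
  calc (Real.log x + Real.log y) / 2 = 1/2 * Real.log x + 1/2 * Real.log y := by ring
    _ ≤ Real.log (1/2 * x + 1/2 * y) := h
    _ = Real.log ((x + y)/2) := by ring_nf

lemma log_mid_lt {x y : ℝ} (hx : 0 < x) (hy : 0 < y) (hne : x ≠ y) :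
    (Real.log x + Real.log y) / 2 < Real.log ((x + y) / 2) := by
  have h := strictConcaveOn_log_Ioi.2 (Set.mem_Ioi.2 hx) (Set.mem_Ioi.2 hy) hne
    (by norm_num : (0:ℝ) < 1/2) (by norm_num : (0:ℝ) < 1/2) (by norm_num)
  simp only [smul_eq_mul] at h
  calc (Real.log x + Real.log y) / 2 = 1/2 * Real.log x + 1/2 * Real.log y := by ring
    _ < Real.log (1/2 * x + 1/2 * y) := h
    _ = Real.log ((x + y)/2) := by ring_nf

end Aux

/-- Existence and uniqueness of the minimizer of `Γ_g` over the positive orthant. -/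
theorem GammaG_exists_unique_minimizer {d : ℕ} (hd : 0 < d)
    (R : (Fin d → ℝ) → ℝ)
    (hRcont : ContinuousOn R {y : Fin d → ℝ | ∀ i, 0 ≤ y i})
    (hRdiff : ContDiffOn ℝ 1 R {y : Fin d → ℝ | ∀ i, 0 < y i})
    (hRconv : ConvexOn ℝ {y : Fin d → ℝ | ∀ i, 0 ≤ y i} R)
    (hRhom : ∀ (y : Fin d → ℝ), (∀ i, 0 ≤ y i) → ∀ l : ℝ, 0 ≤ l →
      R (fun i => l * y i) = l * R y)
    (hRpos : ∀ y : Fin d → ℝ, (∀ i, 0 ≤ y i) → (∑ i, y i) = 1 → 0 < R y)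
    (b : Fin d → ℝ) (hb : ∀ i, 0 < b i) (hbsum : ∑ i, b i = 1)
    (g : ℝ → ℝ) (hg : ContDiffOn ℝ 1 g (Set.Ici 0))
    (hgconv : ConvexOn ℝ (Set.Ici 0) g) (hgmono : StrictMonoOn g (Set.Ici 0)) :
    ∃! y : Fin d → ℝ, (∀ i, 0 < y i) ∧
      ∀ z : Fin d → ℝ, (∀ i, 0 < z i) →
        g (R y) - ∑ i, b i * Real.log (y i) ≤ g (R z) - ∑ i, b i * Real.log (z i) := by
  haveI : Nonempty (Fin d) := ⟨⟨0, hd⟩⟩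
  set Γ : (Fin d → ℝ) → ℝ := fun y => g (R y) - ∑ i, b i * Real.log (y i) with hΓ
  have gmono : MonotoneOn g (Set.Ici 0) := hgmono.monotoneOn
  -- lower bound for R on the simplex
  obtain ⟨w, hw, hwmin⟩ := (isCompact_stdSimplex ℝ (Fin d)).exists_isMinOn
    ⟨fun _ => (d:ℝ)⁻¹, fun i => by positivity, by
      simp [Finset.sum_const, Finset.card_univ]
      field_simp⟩
    (hRcont.mono (fun y hy => hy.1))
  set c := R w with hc
  have hcpos : 0 < c := hRpos w hw.1 hw.2
  -- R y ≥ c * ∑ y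
  have hRlow : ∀ y : Fin d → ℝ, (∀ i, 0 ≤ y i) → c * (∑ i, y i) ≤ R y := by
    intro y hy
    rcases eq_or_lt_of_le (Finset.sum_nonneg fun i _ => hy i) with hS | hS
    · have hy0 : ∀ i, y i = 0 := by
        intro i
        have := (Finset.sum_eq_zero_iff_of_nonneg (fun i _ => hy i)).1 hS.symm i (Finset.mem_univ i)
        exact this
      have : R y = 0 := by
        have h0 := hRhom y hy 0 le_rfl
        simp only [zero_mul] at h0
        have : (fun _ : Fin d => (0:ℝ)) = y := by funext i; rw [hy0 i]
        rwa [this] at h0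
      rw [this, ← hS, mul_zero]
    · set S := ∑ i, y i with hSdef
      have hz : ∀ i, 0 ≤ y i / S := fun i => div_nonneg (hy i) hS.le
      have hzsum : ∑ i, y i / S = 1 := by
        rw [← Finset.sum_div]; field_simp; rfl
      have hmem : (fun i => y i / S) ∈ stdSimplex ℝ (Fin d) := ⟨hz, hzsum⟩
      have h1 : c ≤ R (fun i => y i / S) := hwmin hmem
      have h2 : R (fun i => S * (y i / S)) = S * R (fun i => y i / S) :=
        hRhom _ hz S hS.le
      have h3 : (fun i => S * (y i / S)) = y := by
        funext i; field_simp
      rw [h3] at h2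
      rw [h2, mul_comm]
      exact mul_le_mul_of_nonneg_left h1 hS.le
  have hRnn : ∀ y : Fin d → ℝ, (∀ i, 0 ≤ y i) → 0 ≤ R y := fun y hy =>
    le_trans (mul_nonneg hcpos.le (Finset.sum_nonneg fun i _ => hy i)) (hRlow y hy)
  -- linear growth of g
  set m := g 1 - g 0 with hm
  have hmpos : 0 < m := sub_pos.2 (hgmono (Set.mem_Ici.2 le_rfl) (Set.mem_Ici.2 zero_le_one) zero_lt_one)
  have glin : ∀ t : ℝ, 1 ≤ t → g 0 + m * t ≤ g t := by
    intro t ht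
    have ht0 : 0 < t := lt_of_lt_of_le zero_lt_one ht
    have h1t : (0:ℝ) ≤ 1 - 1/t := sub_nonneg.2 (by rw [div_le_one ht0]; exact ht)
    have h := hgconv.2 (Set.mem_Ici.2 le_rfl) (Set.mem_Ici.2 ht0.le)
      h1t (by positivity : (0:ℝ) ≤ 1/t) (by field_simp; ring)
    simp only [smul_eq_mul, mul_zero, zero_add] at h
    have h' : g (1/t * t) ≤ (1 - 1/t) * g 0 + 1/t * g t := h
    rw [one_div, inv_mul_cancel₀ ht0.ne'] at h'
    have := mul_le_mul_of_nonneg_left h' ht0.le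
    rw [hm]
    have hinv : t * t⁻¹ = 1 := mul_inv_cancel₀ ht0.ne'
    have expand : t * ((1 - t⁻¹) * g 0 + t⁻¹ * g t) = t * g 0 - (t*t⁻¹)*g 0 + (t*t⁻¹)*g t := by
      ring
    rw [expand, hinv, one_mul, one_mul] at this
    linarith
  -- reference point
  set y₀ : Fin d → ℝ := fun _ => 1 with hy₀
  have hy₀pos : ∀ i, (0:ℝ) < y₀ i := fun _ => one_pos
  -- value at reference point
  set V := Γ y₀ with hVdef
  have hV' : V = g (R y₀) := by
    rw [hVdef]
    simp [hΓ, hy₀, Real.log_one]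
  have hRy₀nn : 0 ≤ R y₀ := hRnn y₀ fun i => (hy₀pos i).le
  have hVge : g 0 ≤ V := by
    rw [hV']
    exact gmono (Set.mem_Ici.2 le_rfl) (Set.mem_Ici.2 hRy₀nn) hRy₀nn
  -- the constant a and the threshold A
  set a := m * c / 2 with ha
  have hapos : 0 < a := by rw [ha]; positivity
  set A := max (max (max (d:ℝ) (1/c)) 1) ((V + 1 - g 0 - Real.log a)/a) with hA
  have hA_d : (d:ℝ) ≤ A := le_trans (le_max_left _ _) (le_trans (le_max_left _ _) (le_max_left _ _))
  have hA_c : 1/c ≤ A := le_trans (le_max_right _ _) (le_trans (le_max_left _ _) (le_max_left _ _))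
  have hA1 : (1:ℝ) ≤ A := le_trans (le_max_right _ _) (le_max_left _ _)
  have hA2 : (V + 1 - g 0 - Real.log a)/a ≤ A := le_max_right _ _
  have hApos : 0 < A := lt_of_lt_of_le zero_lt_one hA1
  -- coercivity bound 1 : large sum
  have bound1 : ∀ y : Fin d → ℝ, (∀ i, 0 < y i) → A < ∑ i, y i → V < Γ y := by
    intro y hy hS
    set S := ∑ i, y i with hSdef
    have hSpos : 0 < S := lt_trans hApos hS
    have hcS : 1 ≤ c * S := by
      have h1 : 1/c < S := lt_of_le_of_lt hA_c hS
      rw [div_lt_iff₀ hcpos] at h1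
      nlinarith
    have hlog_sum : ∑ i, b i * Real.log (y i) ≤ Real.log S := by
      calc ∑ i, b i * Real.log (y i) ≤ ∑ i, b i * Real.log S := by
            refine Finset.sum_le_sum fun i _ => ?_
            exact mul_le_mul_of_nonneg_left
              (Real.log_le_log (hy i)
                (Finset.single_le_sum (fun j _ => (hy j).le) (Finset.mem_univ i)))
              (hb i).le
        _ = Real.log S := by rw [← Finset.sum_mul, hbsum, one_mul]
    have hgR : g 0 + m * (c * S) ≤ g (R y) := by
      have h1 : g (c * S) ≤ g (R y) :=
        gmono (Set.mem_Ici.2 (by positivity)) (Set.mem_Ici.2 (hRnn y fun i => (hy i).le))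
          (hRlow y fun i => (hy i).le)
      exact le_trans (glin (c*S) hcS) h1
    have hlogS : Real.log S ≤ a * S - 1 - Real.log a := by
      have h1 : Real.log (a * S) ≤ a * S - 1 := Real.log_le_sub_one_of_pos (by positivity)
      rw [Real.log_mul hapos.ne' hSpos.ne'] at h1
      linarith
    have haA : V + 1 - g 0 - Real.log a ≤ a * S := by
      have h1 : (V + 1 - g 0 - Real.log a)/a * a ≤ A * a :=
        mul_le_mul_of_nonneg_right hA2 hapos.le
      rw [div_mul_cancel₀ _ hapos.ne'] at h1
      nlinarith
    have hmc : m * (c * S) = 2 * (a * S) := by rw [ha]; ring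
    have : V + 1 ≤ Γ y := by
      simp only [hΓ]
      rw [← hSdef] at *
      linarith [hgR, hlog_sum, hlogS, haA, hmc]
    linarith
  -- the minimal weight and the threshold ε
  obtain ⟨i0, -, hi0⟩ := Finset.exists_min_image Finset.univ b Finset.univ_nonempty
  set β := b i0 with hβ
  have hβpos : 0 < β := hb i0
  have hβle : ∀ i, β ≤ b i := fun i => hi0 i (Finset.mem_univ i)
  have hlogA : 0 ≤ Real.log A := Real.log_nonneg hA1
  set ε := Real.exp (-(V + 1 - g 0 + Real.log A)/β) with hε
  have hεpos : 0 < ε := Real.exp_pos _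
  have hε1 : ε ≤ 1 := by
    rw [hε, Real.exp_le_one_iff]
    apply div_nonpos_of_nonpos_of_nonneg _ hβpos.le
    linarith
  have hlogε : β * Real.log ε = -(V + 1 - g 0 + Real.log A) := by
    rw [hε, Real.log_exp]
    field_simp
  -- coercivity bound 2 : small coordinate
  have bound2 : ∀ y : Fin d → ℝ, (∀ i, 0 < y i) → (∑ i, y i) ≤ A →
      (∃ i, y i < ε) → V < Γ y := by
    intro y hy hSA ⟨i, hi⟩
    have hyleA : ∀ j, y j ≤ A := fun j =>
      le_trans (Finset.single_le_sum (fun k _ => (hy k).le) (Finset.mem_univ j)) hSA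
    have herase : ∑ j ∈ Finset.univ.erase i, b j * Real.log (y j) ≤ Real.log A := by
      calc ∑ j ∈ Finset.univ.erase i, b j * Real.log (y j)
          ≤ ∑ j ∈ Finset.univ.erase i, b j * Real.log A := by
            refine Finset.sum_le_sum fun j _ => ?_
            exact mul_le_mul_of_nonneg_left (Real.log_le_log (hy j) (hyleA j)) (hb j).le
        _ ≤ ∑ j, b j * Real.log A := by
            refine Finset.sum_le_sum_of_subset_of_nonneg (Finset.subset_univ _) fun j _ _ => ?_
            exact mul_nonneg (hb j).le hlogA
        _ = Real.log A := by rw [← Finset.sum_mul, hbsum, one_mul]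
    have hterm : b i * Real.log (y i) ≤ β * Real.log ε := by
      have h1 : Real.log (y i) ≤ Real.log ε := Real.log_le_log (hy i) hi.le
      have h2 : Real.log ε ≤ 0 := Real.log_nonpos hεpos.le hε1
      calc b i * Real.log (y i) ≤ b i * Real.log ε :=
            mul_le_mul_of_nonneg_left h1 (hb i).le
        _ ≤ β * Real.log ε := mul_le_mul_of_nonpos_right (hβle i) h2
    have hsum : ∑ j, b j * Real.log (y j) ≤ g 0 - V - 1 := by
      rw [← Finset.sum_erase_add Finset.univ _ (Finset.mem_univ i)]
      have := hlogε
      linarith [herase, hterm]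
    have hgR : g 0 ≤ g (R y) :=
      gmono (Set.mem_Ici.2 le_rfl) (Set.mem_Ici.2 (hRnn y fun j => (hy j).le))
        (hRnn y fun j => (hy j).le)
    have : V + 1 ≤ Γ y := by
      simp only [hΓ]
      linarith
    linarith
  -- the compact set K
  set K : Set (Fin d → ℝ) := {y | (∀ i, ε ≤ y i) ∧ ∑ i, y i ≤ A} with hK
  have hy₀K : y₀ ∈ K := by
    constructor
    · intro i; exact hε1
    · simp only [hy₀, Finset.sum_const, Finset.card_univ, Fintype.card_fin, nsmul_eq_mul,
        mul_one]
      exact hA_d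
  have hKpos : ∀ y ∈ K, ∀ i, 0 < y i := fun y hy i => lt_of_lt_of_le hεpos (hy.1 i)
  have hKsub : K ⊆ Set.Icc (fun _ => ε) (fun _ => A) := by
    intro y hy
    constructor
    · intro i; exact hy.1 i
    · intro i
      exact le_trans (Finset.single_le_sum (fun j _ => (hKpos y hy j).le) (Finset.mem_univ i))
        hy.2
  have hKclosed : IsClosed K := by
    have h1 : IsClosed {y : Fin d → ℝ | ∀ i, ε ≤ y i} := by
      have : {y : Fin d → ℝ | ∀ i, ε ≤ y i} = ⋂ i, {y | ε ≤ y i} := by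
        ext y; simp
      rw [this]
      exact isClosed_iInter fun i => isClosed_le continuous_const (continuous_apply i)
    have h2 : IsClosed {y : Fin d → ℝ | ∑ i, y i ≤ A} :=
      isClosed_le (continuous_finset_sum _ fun i _ => continuous_apply i) continuous_const
    exact h1.inter h2
  have hKcomp : IsCompact K := isCompact_Icc.of_isClosed_subset hKclosed hKsub
  have hKnn : K ⊆ {y : Fin d → ℝ | ∀ i, 0 ≤ y i} := fun y hy i => (hKpos y hy i).le
  -- continuity of Γ on K
  have hΓcont : ContinuousOn Γ K := by
    have c1 : ContinuousOn (fun y => g (R y)) K := by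
      exact (hg.continuousOn).comp (hRcont.mono hKnn) fun y hy =>
        Set.mem_Ici.2 (hRnn y fun i => (hKpos y hy i).le)
    have c2 : ContinuousOn (fun y : Fin d → ℝ => ∑ i, b i * Real.log (y i)) K := by
      refine continuousOn_finset_sum _ fun i _ => ?_
      refine continuousOn_const.mul ?_
      exact Real.continuousOn_log.comp (continuous_apply i).continuousOn
        fun y hy => (hKpos y hy i).ne'
    exact c1.sub c2
  -- minimizer over K
  obtain ⟨ystar, hyK, hmin⟩ := hKcomp.exists_isMinOn ⟨y₀, hy₀K⟩ hΓcont
  have hstarpos : ∀ i, 0 < ystar i := hKpos ystar hyK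
  have hstarV : Γ ystar ≤ V := hmin hy₀K
  -- global minimality
  have hstar_glob : ∀ z : Fin d → ℝ, (∀ i, 0 < z i) → Γ ystar ≤ Γ z := by
    intro z hz
    by_cases hzK : z ∈ K
    · exact hmin hzK
    · rcases le_or_gt (∑ i, z i) A with hSA | hSA
      · have : ∃ i, z i < ε := by
          by_contra hcon
          push_neg at hcon
          exact hzK ⟨hcon, hSA⟩
        exact le_trans hstarV (bound2 z hz hSA this).le
      · exact le_trans hstarV (bound1 z hz hSA).le
  -- uniqueness via strict convexity
  have huniq : ∀ y₁ y₂ : Fin d → ℝ, (∀ i, 0 < y₁ i) → (∀ i, 0 < y₂ i) →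
      (∀ z : Fin d → ℝ, (∀ i, 0 < z i) → Γ y₁ ≤ Γ z) →
      (∀ z : Fin d → ℝ, (∀ i, 0 < z i) → Γ y₂ ≤ Γ z) → y₁ = y₂ := by
    intro y₁ y₂ h₁ h₂ hm₁ hm₂
    by_contra hne
    obtain ⟨i, hi⟩ := Function.ne_iff.1 hne
    have hval : Γ y₁ = Γ y₂ := le_antisymm (hm₁ y₂ h₂) (hm₂ y₁ h₁)
    set wmid : Fin d → ℝ := fun i => (y₁ i + y₂ i)/2 with hwmid
    have hwpos : ∀ i, 0 < wmid i := fun i => by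
      have := h₁ i; have := h₂ i
      simp only [hwmid]; positivity
    -- convexity of g ∘ R at the midpoint
    have hsmul : ((1/2 : ℝ) • y₁ + (1/2 : ℝ) • y₂) = wmid := by
      funext j
      simp only [Pi.add_apply, Pi.smul_apply, smul_eq_mul, hwmid]
      ring
    have hRmid : R wmid ≤ (R y₁ + R y₂)/2 := by
      have h := hRconv.2 (fun j => (h₁ j).le) (fun j => (h₂ j).le)
        (by norm_num : (0:ℝ) ≤ 1/2) (by norm_num : (0:ℝ) ≤ 1/2) (by norm_num)
      rw [hsmul] at h
      simp only [smul_eq_mul] at h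
      linarith
    have hRy₁nn : 0 ≤ R y₁ := hRnn y₁ fun j => (h₁ j).le
    have hRy₂nn : 0 ≤ R y₂ := hRnn y₂ fun j => (h₂ j).le
    have hRwnn : 0 ≤ R wmid := hRnn wmid fun j => (hwpos j).le
    have hgmid : g (R wmid) ≤ (g (R y₁) + g (R y₂))/2 := by
      have h1 : g (R wmid) ≤ g ((R y₁ + R y₂)/2) :=
        gmono (Set.mem_Ici.2 hRwnn) (Set.mem_Ici.2 (by positivity)) hRmid
      have h2 := hgconv.2 (Set.mem_Ici.2 hRy₁nn) (Set.mem_Ici.2 hRy₂nn)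
        (by norm_num : (0:ℝ) ≤ 1/2) (by norm_num : (0:ℝ) ≤ 1/2) (by norm_num)
      simp only [smul_eq_mul] at h2
      have h3 : (1/2 : ℝ) * R y₁ + (1/2 :ℝ) * R y₂ = (R y₁ + R y₂)/2 := by ring
      rw [h3] at h2
      linarith
    -- strict concavity of the log-barrier at the midpoint
    have hlogmid : (∑ j, b j * Real.log (y₁ j) + ∑ j, b j * Real.log (y₂ j))/2
        < ∑ j, b j * Real.log (wmid j) := by
      have heq : (∑ j, b j * Real.log (y₁ j) + ∑ j, b j * Real.log (y₂ j))/2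
          = ∑ j, b j * ((Real.log (y₁ j) + Real.log (y₂ j))/2) := by
        rw [← Finset.sum_add_distrib, Finset.sum_div]
        refine Finset.sum_congr rfl fun j _ => ?_
        ring
      rw [heq]
      refine Finset.sum_lt_sum (fun j _ => ?_) ⟨i, Finset.mem_univ i, ?_⟩
      · exact mul_le_mul_of_nonneg_left (log_mid_le (h₁ j) (h₂ j)) (hb j).le
      · exact mul_lt_mul_of_pos_left (log_mid_lt (h₁ i) (h₂ i) hi) (hb i)
    have hmidlt : Γ wmid < Γ y₂ := by
      have h1 : Γ wmid = g (R wmid) - ∑ j, b j * Real.log (wmid j) := rfl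
      have h2 : Γ y₁ = g (R y₁) - ∑ j, b j * Real.log (y₁ j) := rfl
      have h3 : Γ y₂ = g (R y₂) - ∑ j, b j * Real.log (y₂ j) := rfl
      rw [h1, h3]
      have := hval
      rw [h2, h3] at this
      linarith
    exact absurd (hm₂ wmid hwpos) (not_le.2 hmidlt)
  -- conclusion
  refine ⟨ystar, ⟨hstarpos, fun z hz => hstar_glob z hz⟩, ?_⟩
  intro y' hy'
  exact huniq y' ystar hy'.1 hstarpos hy'.2 hstar_glob
end

section
/- Under the assumptions of the existence theorem, if y* is the unique minimizer of Γ_g(y) = g(R(y)) − Σᵢ bᵢ log yᵢ over (ℝ₊*)^d, then θ* := y*/Σᵢ y*ᵢ lies in the open simplex and satisfies the Risk Budgeting equations θ*ᵢ ∂ᵢR(θ*) = bᵢ R(θ*) for all i. -/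
open Set Filter Topology

lemma rb_open_pos {d : ℕ} : IsOpen {y : Fin d → ℝ | ∀ i, 0 < y i} := by
  have : {y : Fin d → ℝ | ∀ i, 0 < y i} = ⋂ i, {y | 0 < y i} := by ext; simp [Set.mem_iInter]
  rw [this]
  exact isOpen_iInter_of_finite fun i => isOpen_lt continuous_const (continuous_apply i)

lemma rb_euler {d : ℕ} (R : (Fin d → ℝ) → ℝ)
    (hRdiff : DifferentiableOn ℝ R {y : Fin d → ℝ | ∀ i, 0 < y i})
    (hRhom : ∀ (y : Fin d → ℝ), (∀ i, 0 ≤ y i) → ∀ l : ℝ, 0 ≤ l →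
      R (fun i => l * y i) = l * R y)
    (y : Fin d → ℝ) (hy : ∀ i, 0 < y i) :
    fderiv ℝ R y y = R y := by
  have hRy : DifferentiableAt ℝ R y := hRdiff.differentiableAt (rb_open_pos.mem_nhds hy)
  have hin : HasDerivAt (fun t : ℝ => t • y) y 1 := by
    simpa using (hasDerivAt_id (1:ℝ)).smul_const y
  have h1 : HasDerivAt (fun t : ℝ => R (t • y)) (fderiv ℝ R y y) 1 := by
    have h0 : HasFDerivAt R (fderiv ℝ R y) ((1:ℝ) • y) := by
      simpa using hRy.hasFDerivAt
    exact h0.comp_hasDerivAt 1 hin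
  have h2 : (fun t : ℝ => R (t • y)) =ᶠ[𝓝 (1:ℝ)] fun t => t * R y := by
    filter_upwards [eventually_gt_nhds (by norm_num : (0:ℝ) < 1)] with t ht
    have := hRhom y (fun i => (hy i).le) t ht.le
    exact this
  have h3 : HasDerivAt (fun t : ℝ => t * R y) (fderiv ℝ R y y) 1 :=
    h1.congr_of_eventuallyEq h2.symm
  have h4 : HasDerivAt (fun t : ℝ => t * R y) (R y) 1 := by
    simpa using (hasDerivAt_id (1:ℝ)).mul_const (R y)
  exact h3.unique h4

lemma rb_grad_hom {d : ℕ} (R : (Fin d → ℝ) → ℝ)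
    (hRdiff : DifferentiableOn ℝ R {y : Fin d → ℝ | ∀ i, 0 < y i})
    (hRhom : ∀ (y : Fin d → ℝ), (∀ i, 0 ≤ y i) → ∀ l : ℝ, 0 ≤ l →
      R (fun i => l * y i) = l * R y)
    (y : Fin d → ℝ) (hy : ∀ i, 0 < y i) (c : ℝ) (hc : 0 < c) :
    fderiv ℝ R (fun i => c * y i) = fderiv ℝ R y := by
  have hcy : ∀ i, 0 < c * y i := fun i => mul_pos hc (hy i)
  have hRy : DifferentiableAt ℝ R y := hRdiff.differentiableAt (rb_open_pos.mem_nhds hy)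
  have hRcy : DifferentiableAt ℝ R (fun i => c * y i) :=
    hRdiff.differentiableAt (rb_open_pos.mem_nhds hcy)
  set L := fderiv ℝ R (fun i => c * y i) with hL
  -- F₁ = fun x => R (c • x) has fderiv c • L at y
  have hin : HasFDerivAt (fun x : Fin d → ℝ => c • x)
      (c • ContinuousLinearMap.id ℝ (Fin d → ℝ)) y :=
    (c • ContinuousLinearMap.id ℝ (Fin d → ℝ)).hasFDerivAt
  have h1 : HasFDerivAt (fun x : Fin d → ℝ => R (c • x))
      (L.comp (c • ContinuousLinearMap.id ℝ (Fin d → ℝ))) y := by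
    have h := hRcy.hasFDerivAt
    have : HasFDerivAt R L (c • y) := by
      exact h
    exact this.comp y hin
  have h2 : (fun x : Fin d → ℝ => R (c • x)) =ᶠ[𝓝 y] fun x => c * R x := by
    filter_upwards [rb_open_pos.mem_nhds hy] with x hx
    have := hRhom x (fun i => (hx i).le) c hc.le
    exact this
  have h3 : HasFDerivAt (fun x => c * R x)
      (L.comp (c • ContinuousLinearMap.id ℝ (Fin d → ℝ))) y :=
    h1.congr_of_eventuallyEq h2.symm
  have h4 : HasFDerivAt (fun x => c * R x) (c • fderiv ℝ R y) y := by
    simpa [smul_smul] using hRy.hasFDerivAt.const_mul c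
  have h5 := h3.unique h4
  ext v
  have := congrFun (congrArg (fun (M : (Fin d → ℝ) →L[ℝ] ℝ) => (M : (Fin d → ℝ) → ℝ)) h5) v
  simp only [ContinuousLinearMap.comp_apply, ContinuousLinearMap.smul_apply,
    ContinuousLinearMap.id_apply, ContinuousLinearMap.coe_smul', Pi.smul_apply] at this
  have hLv : L (c • v) = c * L v := by rw [map_smul]; simp
  rw [hLv] at this
  field_simp at this
  exact mul_left_cancel₀ hc.ne' this

lemma rb_foc {d : ℕ} (R : (Fin d → ℝ) → ℝ)
    (hRdiff : DifferentiableOn ℝ R {y : Fin d → ℝ | ∀ i, 0 < y i})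
    (b : Fin d → ℝ) (g : ℝ → ℝ)
    (ystar : Fin d → ℝ) (hystar : ∀ i, 0 < ystar i)
    (hgdiff : DifferentiableAt ℝ g (R ystar))
    (hmin : ∀ z : Fin d → ℝ, (∀ i, 0 < z i) →
      g (R ystar) - ∑ i, b i * Real.log (ystar i) ≤ g (R z) - ∑ i, b i * Real.log (z i))
    (i : Fin d) :
    deriv g (R ystar) * fderiv ℝ R ystar (Pi.single i 1) = b i / ystar i := by
  classical
  set v : Fin d → ℝ := Pi.single i 1 with hv
  set u : ℝ → (Fin d → ℝ) := fun t => ystar + (t - ystar i) • v with hu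
  have hu0 : u (ystar i) = ystar := by simp [hu]
  have hut : ∀ t, 0 < t → ∀ j, 0 < u t j := by
    intro t ht j
    by_cases hj : j = i
    · subst hj
      simp [hu, hv, Pi.single_eq_same]
      linarith
    · simpa [hu, hv, Pi.single_eq_of_ne hj] using hystar j
  -- derivative of u
  have hud : HasDerivAt u v (ystar i) := by
    have : HasDerivAt (fun t : ℝ => (t - ystar i) • v) ((1:ℝ) • v) (ystar i) :=
      ((hasDerivAt_id (ystar i)).sub_const (ystar i)).smul_const v
    simpa [hu] using this.const_add ystar
  -- derivative of R ∘ u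
  have hRy : DifferentiableAt ℝ R ystar := hRdiff.differentiableAt (rb_open_pos.mem_nhds hystar)
  have hRu : HasDerivAt (fun t => R (u t)) (fderiv ℝ R ystar v) (ystar i) := by
    have h0 : HasFDerivAt R (fderiv ℝ R ystar) (u (ystar i)) := by
      rw [hu0]; exact hRy.hasFDerivAt
    exact h0.comp_hasDerivAt (ystar i) hud
  -- derivative of g ∘ R ∘ u
  have hgRu : HasDerivAt (fun t => g (R (u t)))
      (deriv g (R ystar) * fderiv ℝ R ystar v) (ystar i) := by
    have hg' : HasDerivAt g (deriv g (R ystar)) (R (u (ystar i))) := by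
      rw [hu0]; exact hgdiff.hasDerivAt
    exact hg'.comp (ystar i) hRu
  -- derivative of log part
  have hlog : HasDerivAt (fun t => ∑ j, b j * Real.log (u t j)) (b i / ystar i) (ystar i) := by
    have key : ∀ j ∈ Finset.univ, HasDerivAt (fun t => b j * Real.log (u t j))
        (if j = i then b i / ystar i else 0) (ystar i) := by
      intro j _
      by_cases hj : j = i
      · subst hj
        have hfe : (fun t => b j * Real.log (u t j)) = fun t => b j * Real.log t := by
          funext t; simp [hu, hv, Pi.single_eq_same]
        rw [hfe]
        simpa [div_eq_mul_inv, mul_comm] using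
          (Real.hasDerivAt_log (hystar j).ne').const_mul (b j)
      · have hfe : (fun t => b j * Real.log (u t j)) = fun _ => b j * Real.log (ystar j) := by
          funext t; simp [hu, hv, Pi.single_eq_of_ne hj]
        rw [hfe]
        simpa [hj] using hasDerivAt_const (ystar i) (b j * Real.log (ystar j))
    have := HasDerivAt.fun_sum key
    simpa using this
  -- local min
  have hΓ : HasDerivAt (fun t => g (R (u t)) - ∑ j, b j * Real.log (u t j))
      (deriv g (R ystar) * fderiv ℝ R ystar v - b i / ystar i) (ystar i) := hgRu.sub hlog
  have hlm : IsLocalMin (fun t => g (R (u t)) - ∑ j, b j * Real.log (u t j)) (ystar i) := by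
    filter_upwards [eventually_gt_nhds (hystar i)] with t ht
    have := hmin (u t) (hut t ht)
    simpa [hu0] using this
  have := hlm.hasDerivAt_eq_zero hΓ
  linarith [this]
/-- The normalization of the minimizer of `Γ_g` solves the Risk Budgeting problem `RB_b`. -/
theorem minimizer_solves_RB {d : ℕ} (hd : 0 < d)
    (R : (Fin d → ℝ) → ℝ)
    (hRcont : ContinuousOn R {y : Fin d → ℝ | ∀ i, 0 ≤ y i})
    (hRdiff : ContDiffOn ℝ 1 R {y : Fin d → ℝ | ∀ i, 0 < y i})
    (hRconv : ConvexOn ℝ {y : Fin d → ℝ | ∀ i, 0 ≤ y i} R)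
    (hRhom : ∀ (y : Fin d → ℝ), (∀ i, 0 ≤ y i) → ∀ l : ℝ, 0 ≤ l →
      R (fun i => l * y i) = l * R y)
    (hRpos : ∀ y : Fin d → ℝ, (∀ i, 0 ≤ y i) → (∑ i, y i) = 1 → 0 < R y)
    (b : Fin d → ℝ) (hb : ∀ i, 0 < b i) (hbsum : ∑ i, b i = 1)
    (g : ℝ → ℝ) (hg : ContDiffOn ℝ 1 g (Set.Ici 0))
    (hgconv : ConvexOn ℝ (Set.Ici 0) g) (hgmono : StrictMonoOn g (Set.Ici 0))
    (ystar : Fin d → ℝ) (hystar : ∀ i, 0 < ystar i)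
    (hmin : ∀ z : Fin d → ℝ, (∀ i, 0 < z i) →
      g (R ystar) - ∑ i, b i * Real.log (ystar i) ≤ g (R z) - ∑ i, b i * Real.log (z i)) :
    let θ : Fin d → ℝ := fun i => ystar i / ∑ j, ystar j
    (∀ i, 0 < θ i) ∧ (∑ i, θ i) = 1 ∧
      ∀ i, θ i * fderiv ℝ R θ (Pi.single i 1) = b i * R θ := by
  intro θ
  classical
  have hS : 0 < ∑ j, ystar j := by
    have : Nonempty (Fin d) := ⟨⟨0, hd⟩⟩
    exact Finset.sum_pos (fun j _ => hystar j) Finset.univ_nonempty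
  have hθpos : ∀ i, 0 < θ i := fun i => div_pos (hystar i) hS
  have hθsum : (∑ i, θ i) = 1 := by
    show (∑ i, ystar i / ∑ j, ystar j) = 1
    rw [← Finset.sum_div]; exact div_self hS.ne'
  refine ⟨hθpos, hθsum, ?_⟩
  have hRθpos : 0 < R θ := hRpos θ (fun i => (hθpos i).le) hθsum
  have hθy : (fun i => (∑ j, ystar j) * θ i) = ystar := by
    funext i; show (∑ j, ystar j) * (ystar i / ∑ j, ystar j) = ystar i
    field_simp
  have hRy_eq : R ystar = (∑ j, ystar j) * R θ := by
    have h := hRhom θ (fun i => (hθpos i).le) (∑ j, ystar j) hS.le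
    rw [hθy] at h; exact h
  have hRypos : 0 < R ystar := by rw [hRy_eq]; positivity
  have hgdiff : DifferentiableAt ℝ g (R ystar) :=
    (hg.differentiableOn one_ne_zero).differentiableAt (Ici_mem_nhds hRypos)
  have hRd : DifferentiableOn ℝ R {y | ∀ i, 0 < y i} := hRdiff.differentiableOn one_ne_zero
  set G := deriv g (R ystar) with hG
  have foc : ∀ i, G * fderiv ℝ R ystar (Pi.single i 1) = b i / ystar i :=
    fun i => rb_foc R hRd b g ystar hystar hgdiff hmin i
  have heuler : fderiv ℝ R ystar ystar = R ystar := rb_euler R hRd hRhom ystar hystar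
  have hlin : fderiv ℝ R ystar ystar = ∑ i, ystar i * fderiv ℝ R ystar (Pi.single i 1) := by
    have hy : ystar = (∑ i, ystar i • (Pi.single i (1:ℝ) : Fin d → ℝ)) := by
      funext j
      simp [Finset.sum_apply, Pi.single_apply]
    rw [show (fderiv ℝ R ystar) ystar
        = (fderiv ℝ R ystar) (∑ i, ystar i • (Pi.single i (1:ℝ) : Fin d → ℝ)) from by
      rw [← hy], map_sum]
    simp [smul_eq_mul]
  have hsum : G * R ystar = 1 := by
    have h1 : ∀ i ∈ Finset.univ, (G * fderiv ℝ R ystar (Pi.single i 1)) * ystar i = b i := by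
      intro i _
      rw [foc i, div_mul_cancel₀ _ (hystar i).ne']
    calc G * R ystar = G * ∑ i, ystar i * fderiv ℝ R ystar (Pi.single i 1) := by
          rw [← hlin, heuler]
      _ = ∑ i, (G * fderiv ℝ R ystar (Pi.single i 1)) * ystar i := by
          rw [Finset.mul_sum]; apply Finset.sum_congr rfl; intro i _; ring
      _ = ∑ i, b i := Finset.sum_congr rfl h1
      _ = 1 := hbsum
  have hkey : ∀ i, fderiv ℝ R ystar (Pi.single i 1) * ystar i = b i * R ystar := by
    intro i
    calc fderiv ℝ R ystar (Pi.single i 1) * ystar i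
        = (G * R ystar) * (fderiv ℝ R ystar (Pi.single i 1) * ystar i) := by rw [hsum]; ring
      _ = ((G * fderiv ℝ R ystar (Pi.single i 1)) * ystar i) * R ystar := by ring
      _ = ((b i / ystar i) * ystar i) * R ystar := by rw [foc i]
      _ = b i * R ystar := by rw [div_mul_cancel₀ _ (hystar i).ne']
  have hθeq : θ = fun i => (∑ j, ystar j)⁻¹ * ystar i := by
    funext i; show ystar i / ∑ j, ystar j = (∑ j, ystar j)⁻¹ * ystar i
    rw [div_eq_inv_mul]
  have hgrad : fderiv ℝ R θ = fderiv ℝ R ystar := by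
    rw [hθeq]
    exact rb_grad_hom R hRd hRhom ystar hystar _ (inv_pos.mpr hS)
  intro i
  rw [hgrad]
  show ystar i / (∑ j, ystar j) * fderiv ℝ R ystar (Pi.single i 1) = b i * R θ
  have hRθ : R θ = R ystar / ∑ j, ystar j := by
    rw [hRy_eq]; field_simp
  rw [hRθ]
  have := hkey i
  field_simp
  linarith [hkey i]
end

section
/- Let b ∈ Δ_d^{>0} and suppose θ in the open simplex solves the Risk Budgeting equations θᵢ∂ᵢR(θ) = bᵢR(θ) for all i. Then there exists λ̄ > 0 such that λ̄θ is a critical point of Γ_g, and hence λ̄θ = y*, the unique minimizer of Γ_g; consequently the Risk Budgeting problem RB_b has at most one solution in the open simplex. -/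
open Set Filter

private lemma slope_le_aux {φ : ℝ → ℝ} {D : ℝ}
    (hconv : ∀ u ∈ Set.Ioc (0:ℝ) 1, φ u ≤ (1 - u) * φ 0 + u * φ 1)
    (hD : HasDerivWithinAt φ D (Set.Ici 0) 0) : D ≤ φ 1 - φ 0 := by
  rw [hasDerivWithinAt_iff_tendsto_slope, Set.Ici_sdiff_left] at hD
  refine le_of_tendsto hD ?_
  filter_upwards [Ioc_mem_nhdsGT zero_lt_one] with u hu
  have h := hconv u hu
  rw [slope_def_field, div_le_iff₀ (by simpa using hu.1)]
  nlinarith [hu.1, h]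

private lemma conv1d_deriv_le {g : ℝ → ℝ} (hgconv : ConvexOn ℝ (Set.Ici 0) g)
    {t s D : ℝ} (ht : 0 < t) (hs : 0 ≤ s) (hD : HasDerivAt g D t) :
    D * (s - t) ≤ g s - g t := by
  have hc : HasDerivAt (fun u : ℝ => t + u * (s - t)) (s - t) 0 := by
    simpa using ((hasDerivAt_id (0:ℝ)).mul_const (s - t)).const_add t
  have hD' : HasDerivAt g D (t + 0 * (s - t)) := by simpa using hD
  have hφ : HasDerivAt (fun u : ℝ => g (t + u * (s - t))) (D * (s - t)) 0 := hD'.comp 0 hc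
  have key := slope_le_aux (φ := fun u : ℝ => g (t + u * (s - t))) ?_ hφ.hasDerivWithinAt
  · simpa [show t + 1 * (s - t) = s by ring] using key
  · intro u hu
    have h2 := hgconv.2 (Set.mem_Ici.mpr ht.le) (Set.mem_Ici.mpr hs)
      (by linarith [hu.2] : (0:ℝ) ≤ 1 - u) hu.1.le (by ring)
    have he : (1 - u) • t + u • s = t + u * (s - t) := by simp [smul_eq_mul]; ring
    rw [he] at h2
    simpa [show t + 0 * (s - t) = t by ring, show t + 1 * (s - t) = s by ring,
      smul_eq_mul] using h2

private lemma convR_fderiv_le {d : ℕ} {R : (Fin d → ℝ) → ℝ}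
    (hRconv : ConvexOn ℝ {y : Fin d → ℝ | ∀ i, 0 ≤ y i} R)
    {y z : Fin d → ℝ} (hy : ∀ i, 0 ≤ y i) (hz : ∀ i, 0 ≤ z i)
    {L : (Fin d → ℝ) →L[ℝ] ℝ} (hL : HasFDerivAt R L y) :
    L (z - y) ≤ R z - R y := by
  set c : ℝ → (Fin d → ℝ) := fun u => y + u • (z - y) with hcdef
  have hc : HasDerivAt c (z - y) 0 := by
    simpa [hcdef] using ((hasDerivAt_id (0:ℝ)).smul_const (z - y)).const_add y
  have hL' : HasFDerivAt R L (c 0) := by simpa [hcdef] using hL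
  have hφ : HasDerivAt (fun u => R (c u)) (L (z - y)) 0 := hL'.comp_hasDerivAt 0 hc
  have key := slope_le_aux (φ := fun u => R (c u)) ?_ hφ.hasDerivWithinAt
  · simpa [hcdef] using key
  · intro u hu
    have hmem : c u = (1 - u) • y + u • z := by
      funext j; simp [hcdef]; ring
    have h2 := hRconv.2 (show y ∈ {y : Fin d → ℝ | ∀ i, 0 ≤ y i} from hy)
      (show z ∈ {y : Fin d → ℝ | ∀ i, 0 ≤ y i} from hz)
      (by linarith [hu.2] : (0:ℝ) ≤ 1 - u) hu.1.le (by ring)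
    rw [← hmem] at h2
    simpa [hcdef, smul_eq_mul] using h2

private lemma gderiv_hasDerivAt {g : ℝ → ℝ} (hg : ContDiffOn ℝ 1 g (Set.Ici 0))
    {t : ℝ} (ht : 0 < t) : HasDerivAt g (deriv g t) t :=
  (((hg.differentiableOn one_ne_zero) t (Set.mem_Ici.mpr ht.le)).differentiableAt
    (Ici_mem_nhds ht)).hasDerivAt

private lemma gderiv_pos {g : ℝ → ℝ} (hg : ContDiffOn ℝ 1 g (Set.Ici 0))
    (hgconv : ConvexOn ℝ (Set.Ici 0) g) (hgmono : StrictMonoOn g (Set.Ici 0))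
    {t : ℝ} (ht : 0 < t) : 0 < deriv g t := by
  have h1 := conv1d_deriv_le hgconv ht (by linarith : (0:ℝ) ≤ t/2) (gderiv_hasDerivAt hg ht)
  have h2 : g (t/2) < g t := hgmono (Set.mem_Ici.mpr (by linarith)) (Set.mem_Ici.mpr ht.le)
    (by linarith)
  nlinarith

private lemma gderiv_mono {g : ℝ → ℝ} (hg : ContDiffOn ℝ 1 g (Set.Ici 0))
    (hgconv : ConvexOn ℝ (Set.Ici 0) g)
    {a c : ℝ} (ha : 0 < a) (hac : a ≤ c) : deriv g a ≤ deriv g c := by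
  rcases eq_or_lt_of_le hac with h | h
  · rw [h]
  · have hc : 0 < c := lt_trans ha h
    have h1 := conv1d_deriv_le hgconv ha hc.le (gderiv_hasDerivAt hg ha)
    have h2 := conv1d_deriv_le hgconv hc ha.le (gderiv_hasDerivAt hg hc)
    nlinarith

private lemma exists_t_mul_deriv_eq_one {g : ℝ → ℝ} (hg : ContDiffOn ℝ 1 g (Set.Ici 0))
    (hgconv : ConvexOn ℝ (Set.Ici 0) g) (hgmono : StrictMonoOn g (Set.Ici 0)) :
    ∃ t : ℝ, 0 < t ∧ t * deriv g t = 1 := by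
  have hcont : ContinuousOn (deriv g) (Set.Ioi 0) := by
    have hg' := hg.continuousOn_derivWithin (uniqueDiffOn_Ici 0) le_rfl
    refine (hg'.mono Set.Ioi_subset_Ici_self).congr ?_
    intro x hx
    exact (derivWithin_of_mem_nhds (Ici_mem_nhds hx)).symm
  set cc : ℝ := deriv g 1 with hccdef
  have hcc : 0 < cc := gderiv_pos hg hgconv hgmono one_pos
  set t₀ : ℝ := min 1 (1/(2*cc)) with ht₀def
  set T : ℝ := max 1 (2/cc) with hTdef
  have ht₀pos : 0 < t₀ := lt_min one_pos (by positivity)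
  have ht₀le1 : t₀ ≤ 1 := min_le_left _ _
  have hT1 : 1 ≤ T := le_max_left _ _
  have ht₀T : t₀ ≤ T := le_trans ht₀le1 hT1
  have hd0 : 0 < deriv g t₀ := gderiv_pos hg hgconv hgmono ht₀pos
  have h0 : t₀ * deriv g t₀ ≤ 1/2 := by
    have hm := gderiv_mono hg hgconv ht₀pos ht₀le1
    have ht₀le : t₀ ≤ 1/(2*cc) := min_le_right _ _
    calc t₀ * deriv g t₀ ≤ t₀ * cc := by nlinarith
      _ ≤ (1/(2*cc)) * cc := by nlinarith
      _ = 1/2 := by field_simp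
  have hT : 2 ≤ T * deriv g T := by
    have hm := gderiv_mono hg hgconv one_pos hT1
    have hTge : 2/cc ≤ T := le_max_right _ _
    have hTpos : 0 < T := lt_of_lt_of_le one_pos hT1
    calc (2:ℝ) = (2/cc) * cc := by field_simp
      _ ≤ T * cc := by nlinarith
      _ ≤ T * deriv g T := by nlinarith
  have hconth : ContinuousOn (fun t => t * deriv g t) (Set.Icc t₀ T) := by
    refine continuousOn_id.mul (hcont.mono ?_)
    intro x hx
    exact lt_of_lt_of_le ht₀pos hx.1
  have hIVT := intermediate_value_Icc ht₀T hconth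
  have h1mem : (1:ℝ) ∈ Set.Icc (t₀ * deriv g t₀) (T * deriv g T) := ⟨by linarith, by linarith⟩
  obtain ⟨t, htmem, hteq⟩ := hIVT h1mem
  exact ⟨t, lt_of_lt_of_le ht₀pos htmem.1, hteq⟩

set_option maxHeartbeats 1000000 in
private lemma RB_core {d : ℕ} (hd : 0 < d)
    (R : (Fin d → ℝ) → ℝ)
    (hRdiff : ContDiffOn ℝ 1 R {y : Fin d → ℝ | ∀ i, 0 < y i})
    (hRconv : ConvexOn ℝ {y : Fin d → ℝ | ∀ i, 0 ≤ y i} R)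
    (hRhom : ∀ (y : Fin d → ℝ), (∀ i, 0 ≤ y i) → ∀ l : ℝ, 0 ≤ l →
      R (fun i => l * y i) = l * R y)
    (hRpos : ∀ y : Fin d → ℝ, (∀ i, 0 ≤ y i) → (∑ i, y i) = 1 → 0 < R y)
    (b : Fin d → ℝ) (hb : ∀ i, 0 < b i) (hbsum : ∑ i, b i = 1)
    (g : ℝ → ℝ) (hg : ContDiffOn ℝ 1 g (Set.Ici 0))
    (hgconv : ConvexOn ℝ (Set.Ici 0) g) (hgmono : StrictMonoOn g (Set.Ici 0))
    (θ : Fin d → ℝ) (hθ : ∀ i, 0 < θ i) (hθsum : ∑ i, θ i = 1)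
    (hθRB : ∀ i, θ i * fderiv ℝ R θ (Pi.single i 1) = b i * R θ)
    (ystar : Fin d → ℝ) (hystar : ∀ i, 0 < ystar i)
    (hmin : ∀ z : Fin d → ℝ, (∀ i, 0 < z i) →
      g (R ystar) - ∑ i, b i * Real.log (ystar i) ≤ g (R z) - ∑ i, b i * Real.log (z i)) :
    ∃ l : ℝ, 0 < l ∧ ystar = fun i => l * θ i := by
  -- positivity of R on the open orthant
  have hRposAll : ∀ z : Fin d → ℝ, (∀ i, 0 < z i) → 0 < R z := by
    intro z hz
    have hne : (Finset.univ : Finset (Fin d)).Nonempty := ⟨⟨0, hd⟩, Finset.mem_univ _⟩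
    have hs : 0 < ∑ i, z i := Finset.sum_pos (fun i _ => hz i) hne
    have h1 : R (fun i => (1/(∑ i, z i)) * z i) = (1/(∑ i, z i)) * R z :=
      hRhom z (fun i => (hz i).le) _ (by positivity)
    have h2 : 0 < R (fun i => (1/(∑ i, z i)) * z i) := by
      refine hRpos _ (fun i => le_of_lt (mul_pos (one_div_pos.mpr hs) (hz i))) ?_
      rw [← Finset.mul_sum]; field_simp
    rw [h1] at h2
    nlinarith [one_div_pos.mpr hs]
  have hRθ : 0 < R θ := hRposAll θ hθ
  -- the scaling factor
  obtain ⟨t, htpos, hteq⟩ := exists_t_mul_deriv_eq_one hg hgconv hgmono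
  have hg't : deriv g t = 1/t := by
    field_simp
    linear_combination hteq
  set l : ℝ := t / R θ with hldef
  have hl : 0 < l := by positivity
  set y : Fin d → ℝ := fun i => l * θ i with hydef
  have hy : ∀ i, 0 < y i := fun i => mul_pos hl (hθ i)
  have hyi : ∀ i, y i = t / R θ * θ i := fun i => rfl
  have hRy : R y = t := by
    rw [hydef, hRhom θ (fun i => (hθ i).le) l hl.le, hldef]
    field_simp
  -- the differential of R at θ
  have hopen : IsOpen {y : Fin d → ℝ | ∀ i, 0 < y i} := by
    have he : {y : Fin d → ℝ | ∀ i, 0 < y i} = Set.pi Set.univ (fun _ => Set.Ioi 0) := by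
      ext w; simp [Set.mem_pi]
    rw [he]; exact isOpen_set_pi Set.finite_univ fun _ _ => isOpen_Ioi
  set L : (Fin d → ℝ) →L[ℝ] ℝ := fderiv ℝ R θ with hLdef
  have hL : HasFDerivAt R L θ := by
    have hdiff : DifferentiableAt ℝ R θ :=
      ((hRdiff.differentiableOn one_ne_zero) θ hθ).differentiableAt (hopen.mem_nhds hθ)
    exact hdiff.hasFDerivAt
  have hLsum : ∀ z : Fin d → ℝ, L z = ∑ i, z i * L (Pi.single i 1) := by
    intro z
    have hz : z = ∑ i, z i • (Pi.single i (1:ℝ) : Fin d → ℝ) := by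
      funext j
      simp [Pi.single_apply]
    conv_lhs => rw [hz]
    rw [map_sum]
    simp [map_smul, smul_eq_mul]
  have hEuler : L θ = R θ := by
    rw [hLsum θ]
    calc ∑ i, θ i * L (Pi.single i 1) = ∑ i, b i * R θ :=
          Finset.sum_congr rfl (fun i _ => hθRB i)
      _ = R θ := by rw [← Finset.sum_mul, hbsum, one_mul]
  have hLi : ∀ i, L (Pi.single i 1) = b i * R θ / θ i := by
    intro i
    rw [eq_div_iff (hθ i).ne']
    have := hθRB i; linarith
  -- y is a global minimizer of Γ over the open orthant
  have hminy : ∀ z : Fin d → ℝ, (∀ i, 0 < z i) →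
      g (R y) - ∑ i, b i * Real.log (y i) ≤ g (R z) - ∑ i, b i * Real.log (z i) := by
    intro z hz
    have hRz : 0 < R z := hRposAll z hz
    have k1 : deriv g t * (R z - t) ≤ g (R z) - g t :=
      conv1d_deriv_le hgconv htpos hRz.le (gderiv_hasDerivAt hg htpos)
    have k2 : L (z - θ) ≤ R z - R θ :=
      convR_fderiv_le hRconv (fun i => (hθ i).le) (fun i => (hz i).le) hL
    have k2' : L z ≤ R z := by
      have hsplit : L z = L (z - θ) + L θ := by rw [map_sub]; ring
      rw [hsplit, hEuler]; linarith
    have k3 : ∀ i, Real.log (z i) - Real.log (y i) ≤ z i / y i - 1 := by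
      intro i
      have h := Real.log_le_sub_one_of_pos (div_pos (hz i) (hy i))
      rwa [Real.log_div (hz i).ne' (hy i).ne'] at h
    have k3sum : ∑ i, b i * Real.log (z i) - ∑ i, b i * Real.log (y i)
        ≤ (∑ i, b i * (z i / y i)) - 1 := by
      have h1 : ∑ i, b i * Real.log (z i) - ∑ i, b i * Real.log (y i)
          = ∑ i, b i * (Real.log (z i) - Real.log (y i)) := by
        rw [← Finset.sum_sub_distrib]
        exact Finset.sum_congr rfl (fun i _ => by ring)
      have h2 : ∑ i, b i * (Real.log (z i) - Real.log (y i))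
          ≤ ∑ i, b i * (z i / y i - 1) :=
        Finset.sum_le_sum (fun i _ => mul_le_mul_of_nonneg_left (k3 i) (hb i).le)
      have h3 : ∑ i, b i * (z i / y i - 1) = (∑ i, b i * (z i / y i)) - ∑ i, b i := by
        rw [← Finset.sum_sub_distrib]
        exact Finset.sum_congr rfl (fun i _ => by ring)
      rw [hbsum] at h3
      linarith
    have ksum : ∑ i, b i * (z i / y i) = (1/t) * L z := by
      rw [hLsum z, Finset.mul_sum]
      refine Finset.sum_congr rfl (fun i _ => ?_)
      rw [hLi i, hyi i]
      field_simp
    have kfin : (1/t) * L z ≤ (1/t) * R z := by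
      have h1t : 0 < 1/t := by positivity
      nlinarith
    rw [hRy]
    have hgz : g t + (1/t) * R z - 1 ≤ g (R z) := by
      rw [← hg't]; nlinarith
    linarith [k3sum, ksum.le, ksum.ge, kfin, hgz]
  -- both y and ystar are minimizers, so by strict convexity they coincide
  have e1 := hminy ystar hystar
  have e2 := hmin y hy
  have heq : g (R y) - ∑ i, b i * Real.log (y i)
      = g (R ystar) - ∑ i, b i * Real.log (ystar i) := le_antisymm e1 e2
  -- strict convexity argument
  have hyeq : y = ystar := by
    by_contra hne
    have hex : ∃ i₀, y i₀ ≠ ystar i₀ := by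
      by_contra hno
      push_neg at hno
      exact hne (funext hno)
    obtain ⟨i₀, hi₀⟩ := hex
    set m : Fin d → ℝ := fun i => (y i + ystar i)/2 with hmdef
    have hm : ∀ i, 0 < m i := fun i => by
      have h1 := hy i; have h2 := hystar i
      show 0 < (y i + ystar i)/2
      positivity
    have hmm : (1/2 : ℝ) • y + (1/2 : ℝ) • ystar = m := by
      funext j
      show (1/2 : ℝ) * y j + (1/2 : ℝ) * ystar j = (y j + ystar j)/2
      ring
    have hRm : R m ≤ (R y + R ystar)/2 := by
      have h2 := hRconv.2 (show y ∈ {w : Fin d → ℝ | ∀ i, 0 ≤ w i} from fun i => (hy i).le)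
        (show ystar ∈ {w : Fin d → ℝ | ∀ i, 0 ≤ w i} from fun i => (hystar i).le)
        (by norm_num : (0:ℝ) ≤ 1/2) (by norm_num : (0:ℝ) ≤ 1/2) (by norm_num)
      rw [hmm] at h2
      have he : (1/2 : ℝ) • R y + (1/2 : ℝ) • R ystar = (R y + R ystar)/2 := by
        simp only [smul_eq_mul]; ring
      rw [he] at h2
      exact h2
    have hRy0 : 0 < R y := hRposAll y hy
    have hRys : 0 < R ystar := hRposAll ystar hystar
    have hRm0 : 0 < R m := hRposAll m hm
    have hgm : g (R m) ≤ (g (R y) + g (R ystar))/2 := by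
      have hmono := hgmono.monotoneOn
      have h1 : g (R m) ≤ g ((R y + R ystar)/2) :=
        hmono (Set.mem_Ici.mpr hRm0.le) (Set.mem_Ici.mpr (by positivity)) hRm
      have h2 := hgconv.2 (Set.mem_Ici.mpr hRy0.le) (Set.mem_Ici.mpr hRys.le)
        (by norm_num : (0:ℝ) ≤ 1/2) (by norm_num : (0:ℝ) ≤ 1/2) (by norm_num)
      have he : (1/2 : ℝ) • R y + (1/2 : ℝ) • R ystar = (R y + R ystar)/2 := by
        simp only [smul_eq_mul]; ring
      rw [he] at h2
      calc g (R m) ≤ g ((R y + R ystar)/2) := h1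
        _ ≤ (1/2:ℝ) * g (R y) + (1/2:ℝ) * g (R ystar) := by
            simpa [smul_eq_mul] using h2
        _ = (g (R y) + g (R ystar))/2 := by ring
    have hmid : ∀ i, (1/2 : ℝ) • y i + (1/2 : ℝ) • ystar i = m i := by
      intro i
      show (1/2 : ℝ) • y i + (1/2 : ℝ) • ystar i = (y i + ystar i)/2
      simp only [smul_eq_mul]; ring
    have hlog : ∑ i, b i * ((Real.log (y i) + Real.log (ystar i))/2)
        < ∑ i, b i * Real.log (m i) := by
      refine Finset.sum_lt_sum (fun i _ => ?_) ⟨i₀, Finset.mem_univ _, ?_⟩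
      · rcases eq_or_ne (y i) (ystar i) with h | h
        · have hm1 : m i = ystar i := by
            rw [← hmid i, h]; simp only [smul_eq_mul]; ring
          rw [hm1, h]
          have : (Real.log (ystar i) + Real.log (ystar i))/2 = Real.log (ystar i) := by ring
          rw [this]
        · have hcc := strictConcaveOn_log_Ioi.2 (Set.mem_Ioi.mpr (hy i))
            (Set.mem_Ioi.mpr (hystar i)) h
            (by norm_num : (0:ℝ) < 1/2) (by norm_num : (0:ℝ) < 1/2) (by norm_num)
          rw [hmid i] at hcc
          have h2 : (1/2:ℝ) * Real.log (y i) + (1/2:ℝ) * Real.log (ystar i)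
              ≤ Real.log (m i) := by simpa [smul_eq_mul] using hcc.le
          refine mul_le_mul_of_nonneg_left ?_ (hb i).le
          linarith
      · have hcc := strictConcaveOn_log_Ioi.2 (Set.mem_Ioi.mpr (hy i₀))
          (Set.mem_Ioi.mpr (hystar i₀)) hi₀
          (by norm_num : (0:ℝ) < 1/2) (by norm_num : (0:ℝ) < 1/2) (by norm_num)
        rw [hmid i₀] at hcc
        have h2 : (1/2:ℝ) * Real.log (y i₀) + (1/2:ℝ) * Real.log (ystar i₀)
            < Real.log (m i₀) := by simpa [smul_eq_mul] using hcc
        have hbi := hb i₀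
        nlinarith
    have hsplit : ∑ i, b i * ((Real.log (y i) + Real.log (ystar i))/2)
        = (∑ i, b i * Real.log (y i))/2 + (∑ i, b i * Real.log (ystar i))/2 := by
      rw [Finset.sum_div, Finset.sum_div, ← Finset.sum_add_distrib]
      exact Finset.sum_congr rfl (fun i _ => by ring)
    have hGm : g (R m) - ∑ i, b i * Real.log (m i)
        < g (R ystar) - ∑ i, b i * Real.log (ystar i) := by
      linarith [hgm, hlog, hsplit, heq]
    exact absurd (hmin m hm) (not_le.mpr hGm)
  exact ⟨l, hl, hyeq.symm⟩

/-- Uniqueness of the Risk Budgeting portfolio: any solution `θ` of `RB_b` in the open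
simplex is, up to a positive scaling factor `λ̄`, the unique minimizer `y*` of `Γ_g`;
consequently `RB_b` has at most one solution in the open simplex. -/
theorem RB_solution_unique {d : ℕ} (hd : 0 < d)
    (R : (Fin d → ℝ) → ℝ)
    (hRcont : ContinuousOn R {y : Fin d → ℝ | ∀ i, 0 ≤ y i})
    (hRdiff : ContDiffOn ℝ 1 R {y : Fin d → ℝ | ∀ i, 0 < y i})
    (hRconv : ConvexOn ℝ {y : Fin d → ℝ | ∀ i, 0 ≤ y i} R)
    (hRhom : ∀ (y : Fin d → ℝ), (∀ i, 0 ≤ y i) → ∀ l : ℝ, 0 ≤ l →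
      R (fun i => l * y i) = l * R y)
    (hRpos : ∀ y : Fin d → ℝ, (∀ i, 0 ≤ y i) → (∑ i, y i) = 1 → 0 < R y)
    (b : Fin d → ℝ) (hb : ∀ i, 0 < b i) (hbsum : ∑ i, b i = 1)
    (g : ℝ → ℝ) (hg : ContDiffOn ℝ 1 g (Set.Ici 0))
    (hgconv : ConvexOn ℝ (Set.Ici 0) g) (hgmono : StrictMonoOn g (Set.Ici 0))
    (θ : Fin d → ℝ) (hθ : ∀ i, 0 < θ i) (hθsum : ∑ i, θ i = 1)
    (hθRB : ∀ i, θ i * fderiv ℝ R θ (Pi.single i 1) = b i * R θ)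
    (ystar : Fin d → ℝ) (hystar : ∀ i, 0 < ystar i)
    (hmin : ∀ z : Fin d → ℝ, (∀ i, 0 < z i) →
      g (R ystar) - ∑ i, b i * Real.log (ystar i) ≤ g (R z) - ∑ i, b i * Real.log (z i)) :
    (∃ l : ℝ, 0 < l ∧ ystar = fun i => l * θ i) ∧
    ∀ θ' : Fin d → ℝ, (∀ i, 0 < θ' i) → (∑ i, θ' i = 1) →
      (∀ i, θ' i * fderiv ℝ R θ' (Pi.single i 1) = b i * R θ') → θ' = θ := by
  have hpart1 := RB_core hd R hRdiff hRconv hRhom hRpos b hb hbsum g hg hgconv hgmono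
    θ hθ hθsum hθRB ystar hystar hmin
  refine ⟨hpart1, ?_⟩
  intro θ' hθ' hθ'sum hθ'RB
  have hpart2 := RB_core hd R hRdiff hRconv hRhom hRpos b hb hbsum g hg hgconv hgmono
    θ' hθ' hθ'sum hθ'RB ystar hystar hmin
  obtain ⟨l, hl, hle⟩ := hpart1
  obtain ⟨l', hl', hle'⟩ := hpart2
  have h1 : ∑ i, ystar i = l := by
    simp only [hle]
    rw [← Finset.mul_sum, hθsum, mul_one]
  have h2 : ∑ i, ystar i = l' := by
    simp only [hle']
    rw [← Finset.mul_sum, hθ'sum, mul_one]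
  have hll' : l = l' := h1.symm.trans h2
  funext i
  have hfi : l * θ i = l' * θ' i := (congrFun hle i).symm.trans (congrFun hle' i)
  rw [← hll'] at hfi
  exact (mul_left_cancel₀ hl.ne' hfi.symm)
end

section
/- Let b ∈ Δ_d^{>0} and let θ ∈ Δ_d^{>0} be the solution of the Risk Budgeting problem RB_b for a convex, positively homogeneous risk function R positive on the simplex. Then R(θ) ≤ R(b). More precisely, R(θ) ≤ R(b) − (1/λ) Σᵢ bᵢ log(bᵢ/θᵢ) ≤ R(b), where λ = Σᵢ y*ᵢ and y* is the minimizer of y ↦ R(y) − Σᵢ bᵢ log yᵢ. -/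
open Set Finset

lemma gibbs {d : ℕ} (b t : Fin d → ℝ) (hb : ∀ i, 0 < b i) (ht : ∀ i, 0 < t i)
    (hsum : ∑ i, t i ≤ ∑ i, b i) : 0 ≤ ∑ i, b i * Real.log (b i / t i) := by
  have h : ∀ i, b i - t i ≤ b i * Real.log (b i / t i) := by
    intro i
    have hbi := hb i; have hti := ht i
    have h1 : Real.log (t i / b i) ≤ t i / b i - 1 :=
      Real.log_le_sub_one_of_pos (by positivity)
    have h2 : Real.log (b i / t i) = - Real.log (t i / b i) := by
      rw [← Real.log_inv]; congr 1; field_simp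
    rw [h2]
    have h3 := mul_le_mul_of_nonneg_left h1 hbi.le
    have h4 : b i * (t i / b i - 1) = t i - b i := by field_simp
    nlinarith
  calc (0:ℝ) ≤ ∑ i, (b i - t i) := by rw [Finset.sum_sub_distrib]; linarith
  _ ≤ _ := Finset.sum_le_sum fun i _ => h i

lemma convex_min_of_fderiv_zero {E : Type*} [NormedAddCommGroup E] [NormedSpace ℝ E]
    {s : Set E} {f : E → ℝ} (hconv : ConvexOn ℝ s f) {c : E}
    (hc : c ∈ s) (hd : HasFDerivAt f (0 : E →L[ℝ] ℝ) c) {z : E} (hz : z ∈ s) :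
    f c ≤ f z := by
  set φ : ℝ → ℝ := f ∘ (AffineMap.lineMap c z) with hφ
  have hφconv : ConvexOn ℝ (Icc (0:ℝ) 1) φ := by
    refine (hconv.comp_affineMap (AffineMap.lineMap c z)).subset ?_ (convex_Icc 0 1)
    intro t ht
    exact hconv.1.lineMap_mem hc hz ht
  have hpath : HasDerivAt (fun t : ℝ => AffineMap.lineMap c z t) (z - c) 0 := by
    have : ∀ t : ℝ, AffineMap.lineMap c z t = t • (z - c) + c := by
      intro t; simp [AffineMap.lineMap_apply]
    simp_rw [this]
    simpa using ((hasDerivAt_id (0:ℝ)).smul_const (z - c)).add_const c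
  have h0 : AffineMap.lineMap c z (0:ℝ) = c := AffineMap.lineMap_apply_zero c z
  have hφd : HasDerivAt φ 0 0 := by
    have hd' : HasFDerivAt f (0 : E →L[ℝ] ℝ) ((fun t : ℝ => AffineMap.lineMap c z t) 0) := by
      simpa [h0] using hd
    have := hd'.comp_hasDerivAt (0:ℝ) hpath
    simpa using this
  have := hφconv.le_slope_of_hasDerivAt (x := 0) (y := 1)
    (by simp) (by simp) one_pos hφd
  have hs : slope φ 0 1 = φ 1 - φ 0 := by simp [slope_def_field]
  rw [hs] at this
  have h1 : φ 1 = f z := by simp [hφ]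
  have h00 : φ 0 = f c := by simp [hφ]
  linarith

lemma convexOn_finset_sum {E ι : Type*} [AddCommGroup E] [Module ℝ E]
    {s : Set E} (hs : Convex ℝ s) (t : Finset ι) {f : ι → E → ℝ}
    (hf : ∀ i ∈ t, ConvexOn ℝ s (f i)) : ConvexOn ℝ s (fun y => ∑ i ∈ t, f i y) := by
  classical
  induction t using Finset.induction_on with
  | empty => simpa using convexOn_const (0:ℝ) hs
  | insert _ _ hx ih =>
    rename_i a u
    simp_rw [Finset.sum_insert hx]
    exact (hf a (Finset.mem_insert_self a u)).add
      (ih fun i hi => hf i (Finset.mem_insert_of_mem hi))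

set_option maxHeartbeats 1000000 in
/-- The Risk Budgeting portfolio has a smaller risk than the portfolio whose weights are
the risk budgets: `R(θ) ≤ R(b) - (1/λ) ∑ bᵢ log (bᵢ/θᵢ) ≤ R(b)` where `λ = ∑ y*ᵢ` and
`y*` minimizes `y ↦ R(y) - ∑ bᵢ log yᵢ`. -/
theorem RB_risk_le_budget_risk {d : ℕ} (hd : 0 < d)
    (R : (Fin d → ℝ) → ℝ)
    (hRcont : ContinuousOn R {y : Fin d → ℝ | ∀ i, 0 ≤ y i})
    (hRdiff : ContDiffOn ℝ 1 R {y : Fin d → ℝ | ∀ i, 0 < y i})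
    (hRconv : ConvexOn ℝ {y : Fin d → ℝ | ∀ i, 0 ≤ y i} R)
    (hRhom : ∀ (y : Fin d → ℝ), (∀ i, 0 ≤ y i) → ∀ l : ℝ, 0 ≤ l →
      R (fun i => l * y i) = l * R y)
    (hRpos : ∀ y : Fin d → ℝ, (∀ i, 0 ≤ y i) → (∑ i, y i) = 1 → 0 < R y)
    (b : Fin d → ℝ) (hb : ∀ i, 0 < b i) (hbsum : ∑ i, b i = 1)
    (θ : Fin d → ℝ) (hθ : ∀ i, 0 < θ i) (hθsum : ∑ i, θ i = 1)
    (hθRB : ∀ i, θ i * fderiv ℝ R θ (Pi.single i 1) = b i * R θ)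
    (ystar : Fin d → ℝ) (hystar : ∀ i, 0 < ystar i)
    (hmin : ∀ z : Fin d → ℝ, (∀ i, 0 < z i) →
      R ystar - ∑ i, b i * Real.log (ystar i) ≤ R z - ∑ i, b i * Real.log (z i)) :
    R θ ≤ R b - (1 / ∑ i, ystar i) * ∑ i, b i * Real.log (b i / θ i) ∧
    R b - (1 / ∑ i, ystar i) * ∑ i, b i * Real.log (b i / θ i) ≤ R b := by
  classical
  set S : Set (Fin d → ℝ) := {y | ∀ i, 0 < y i} with hS
  have hSpi : S = Set.pi Set.univ (fun _ => Set.Ioi (0:ℝ)) := by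
    ext y; simp [hS, Set.mem_pi]
  have hSopen : IsOpen S := by
    rw [hSpi]; exact isOpen_set_pi Set.finite_univ (fun i _ => isOpen_Ioi)
  have hSconv : Convex ℝ S := by
    rw [hSpi]; exact convex_pi (fun i _ => convex_Ioi 0)
  have hSsub : S ⊆ {y : Fin d → ℝ | ∀ i, 0 ≤ y i} := fun y hy i => (hy i).le
  set Γ : (Fin d → ℝ) → ℝ := fun y => R y - ∑ i, b i * Real.log (y i) with hΓ
  -- convexity of Γ on S
  have hΓconv : ConvexOn ℝ S Γ := by
    have hneglog : ConvexOn ℝ (Ioi (0:ℝ)) (fun x => -Real.log x) :=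
      strictConcaveOn_log_Ioi.concaveOn.neg
    have hterm : ∀ i : Fin d, ConvexOn ℝ S (fun y => -(b i * Real.log (y i))) := by
      intro i
      have h1 : ConvexOn ℝ ((LinearMap.proj i : (Fin d → ℝ) →ₗ[ℝ] ℝ) ⁻¹' (Ioi 0))
          (fun y : Fin d → ℝ => -Real.log (y i)) := hneglog.comp_linearMap _
      have h2 : ConvexOn ℝ S (fun y : Fin d → ℝ => -Real.log (y i)) :=
        h1.subset (fun y hy => Set.mem_preimage.mpr (Set.mem_Ioi.mpr (hy i))) hSconv
      have h3 := h2.smul (c := b i) (hb i).le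
      have h4 : (fun y : Fin d → ℝ => -(b i * Real.log (y i)))
          = fun y => b i • (-Real.log (y i)) := by
        funext y; simp [smul_eq_mul]
      rw [h4]; exact h3
    have hsum := convexOn_finset_sum hSconv Finset.univ (fun i _ => hterm i)
    have hadd := (hRconv.subset hSsub hSconv).add hsum
    have heq : Γ = (R + fun y => ∑ i, -(b i * Real.log (y i))) := by
      funext y
      simp [hΓ, sub_eq_add_neg, Finset.sum_neg_distrib]
    rw [heq]; exact hadd
  have hθS : θ ∈ S := hθ
  have hyS : ystar ∈ S := hystar
  set l : ℝ := R θ with hl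
  have hlpos : 0 < l := hRpos θ (fun i => (hθ i).le) hθsum
  set c : Fin d → ℝ := fun i => l⁻¹ * θ i with hc
  have hcpos : ∀ i, 0 < c i := fun i => mul_pos (inv_pos.mpr hlpos) (hθ i)
  have hcS : c ∈ S := hcpos
  have hdiffAt : ∀ y ∈ S, DifferentiableAt ℝ R y := fun y hy =>
    ((hRdiff.differentiableOn one_ne_zero) y hy).differentiableAt (hSopen.mem_nhds hy)
  -- gradient of R is the same at c and θ (degree-0 homogeneity)
  have hgrad : ∀ v, fderiv ℝ R c v = fderiv ℝ R θ v := by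
    intro v
    set A : (Fin d → ℝ) →L[ℝ] (Fin d → ℝ) := l • (ContinuousLinearMap.id ℝ _) with hA
    have hAapp : ∀ y : Fin d → ℝ, A y = fun i => l * y i := by
      intro y; funext i; simp [hA]
    have hAc : A c = θ := by
      rw [hAapp]; funext i; rw [hc]; field_simp
    have hEq : (fun y => R (A y)) =ᶠ[nhds c] (fun y => l * R y) := by
      filter_upwards [hSopen.mem_nhds hcS] with y hy
      rw [hAapp]; exact hRhom y (fun i => (hy i).le) l hlpos.le
    have hd1 : fderiv ℝ (fun y => R (A y)) c = (fderiv ℝ R θ).comp A := by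
      have hRA : DifferentiableAt ℝ R (A c) := by rw [hAc]; exact hdiffAt θ hθS
      have hcomp := fderiv_comp c hRA A.differentiableAt
      rw [hAc, A.fderiv] at hcomp
      exact hcomp
    have hd2 : fderiv ℝ (fun y => l * R y) c = l • fderiv ℝ R c :=
      fderiv_const_mul (hdiffAt c hcS) l
    have hfe := hEq.fderiv_eq (𝕜 := ℝ)
    rw [hd1, hd2] at hfe
    have hv := congrArg (fun (L : (Fin d → ℝ) →L[ℝ] ℝ) => L v) hfe
    simp only [ContinuousLinearMap.comp_apply, ContinuousLinearMap.smul_apply] at hv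
    have hAv : A v = l • v := by simp [hA]
    rw [hAv, map_smul] at hv
    have hv' : l * (fderiv ℝ R c v) = l * (fderiv ℝ R θ v) := by
      simp only [smul_eq_mul] at hv
      exact hv.symm
    exact mul_left_cancel₀ (ne_of_gt hlpos) hv'
  -- derivative of the log part at c
  set G : (Fin d → ℝ) →L[ℝ] ℝ :=
    ∑ i : Fin d, (b i / c i) • (ContinuousLinearMap.proj i) with hG
  have hgderiv : HasFDerivAt (fun y : Fin d → ℝ => ∑ i, b i * Real.log (y i)) G c := by
    rw [hG]
    apply HasFDerivAt.fun_sum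
    intro i _
    have hlog : HasDerivAt Real.log (c i)⁻¹ (c i) := Real.hasDerivAt_log (ne_of_gt (hcpos i))
    have hproj : HasFDerivAt (fun y : Fin d → ℝ => y i)
        (ContinuousLinearMap.proj i : (Fin d → ℝ) →L[ℝ] ℝ) c :=
      (ContinuousLinearMap.proj i : (Fin d → ℝ) →L[ℝ] ℝ).hasFDerivAt
    have hcm := (hlog.comp_hasFDerivAt c hproj).const_mul (b i)
    rw [div_eq_mul_inv, ← smul_smul]
    exact hcm
  have hGapp : ∀ i, G (Pi.single i 1) = b i / c i := by
    intro i
    rw [hG]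
    simp only [ContinuousLinearMap.sum_apply, ContinuousLinearMap.smul_apply,
      ContinuousLinearMap.proj_apply]
    rw [Finset.sum_eq_single i]
    · simp
    · intro j _ hj; simp [Pi.single_apply, hj]
    · simp
  -- Γ has zero derivative at c
  have hΓderiv : HasFDerivAt Γ (0 : (Fin d → ℝ) →L[ℝ] ℝ) c := by
    have hRd : HasFDerivAt R (fderiv ℝ R c) c := (hdiffAt c hcS).hasFDerivAt
    have hsub := hRd.sub hgderiv
    have hzero : fderiv ℝ R c - G = 0 := by
      ext1 v
      have hbasis : v = ∑ i : Fin d, v i • (Pi.single i 1 : Fin d → ℝ) := by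
        funext j
        rw [Finset.sum_apply]
        rw [Finset.sum_eq_single j]
        · simp
        · intro i _ hi; simp [Pi.single_apply, hi.symm]
        · simp
      have hLi : ∀ i, (fderiv ℝ R c - G) (Pi.single i 1) = 0 := by
        intro i
        have h1 : fderiv ℝ R θ (Pi.single i 1) = b i * l / θ i := by
          have hrb := hθRB i
          rw [eq_div_iff (ne_of_gt (hθ i))]
          linear_combination hrb
        have h2 : b i / c i = b i * l / θ i := by
          rw [hc]; field_simp
        simp [hgrad, h1, hGapp, h2]
      calc (fderiv ℝ R c - G) v
          = (fderiv ℝ R c - G) (∑ i : Fin d, v i • (Pi.single i 1 : Fin d → ℝ)) := by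
            rw [← hbasis]
      _ = ∑ i, v i • ((fderiv ℝ R c - G) (Pi.single i (1:ℝ))) := by
            rw [map_sum]; simp only [map_smul]
      _ = 0 := by simp [hLi]
    have hfin : HasFDerivAt Γ (fderiv ℝ R c - G) c := hsub
    rwa [hzero] at hfin
  -- c is a global minimizer of Γ on S
  have hmin_c : ∀ z ∈ S, Γ c ≤ Γ z := fun z hz =>
    convex_min_of_fderiv_zero hΓconv hcS hΓderiv hz
  -- ystar is also a minimizer, so Γ c = Γ ystar
  have hΓeq : Γ c = Γ ystar :=
    le_antisymm (hmin_c ystar hyS) (hmin c hcpos)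
  -- uniqueness: ystar = c
  have hy_eq_c : ystar = c := by
    by_contra hne
    obtain ⟨i0, hi0⟩ := Function.ne_iff.mp hne
    set m : Fin d → ℝ := (1/2 : ℝ) • ystar + (1/2 : ℝ) • c with hm
    have hmi : ∀ i, m i = (1/2) * ystar i + (1/2) * c i := fun i => by
      simp [hm]
    have hmS : m ∈ S := by
      intro i; rw [hmi]
      have h1 := hystar i; have h2 := hcpos i; positivity
    have hRm : R m ≤ (1/2) * R ystar + (1/2) * R c := by
      have := hRconv.2 (hSsub hyS) (hSsub hcS)
        (by norm_num : (0:ℝ) ≤ 1/2) (by norm_num : (0:ℝ) ≤ 1/2) (by norm_num)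
      simpa [hm, smul_eq_mul] using this
    have hloge : ∀ i, (1/2) * Real.log (ystar i) + (1/2) * Real.log (c i)
        ≤ Real.log (m i) := by
      intro i
      have := strictConcaveOn_log_Ioi.concaveOn.2 (hystar i) (hcpos i)
        (by norm_num : (0:ℝ) ≤ 1/2) (by norm_num : (0:ℝ) ≤ 1/2) (by norm_num)
      simpa [hmi, smul_eq_mul] using this
    have hlogs : ∀ i, b i * ((1/2) * Real.log (ystar i) + (1/2) * Real.log (c i))
        ≤ b i * Real.log (m i) := fun i =>
      mul_le_mul_of_nonneg_left (hloge i) (hb i).le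
    have hstrict : b i0 * ((1/2) * Real.log (ystar i0) + (1/2) * Real.log (c i0))
        < b i0 * Real.log (m i0) := by
      have := strictConcaveOn_log_Ioi.2 (hystar i0) (hcpos i0) hi0
        (by norm_num : (0:ℝ) < 1/2) (by norm_num : (0:ℝ) < 1/2) (by norm_num)
      have h' : (1/2) * Real.log (ystar i0) + (1/2) * Real.log (c i0)
          < Real.log (m i0) := by simpa [hmi, smul_eq_mul] using this
      exact mul_lt_mul_of_pos_left h' (hb i0)
    have hsumlt : ∑ i, b i * ((1/2) * Real.log (ystar i) + (1/2) * Real.log (c i))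
        < ∑ i, b i * Real.log (m i) :=
      Finset.sum_lt_sum (fun i _ => hlogs i) ⟨i0, Finset.mem_univ i0, hstrict⟩
    have hexp : ∑ i, b i * ((1/2) * Real.log (ystar i) + (1/2) * Real.log (c i))
        = (1/2) * ∑ i, b i * Real.log (ystar i) + (1/2) * ∑ i, b i * Real.log (c i) := by
      rw [Finset.mul_sum, Finset.mul_sum, ← Finset.sum_add_distrib]
      congr 1; funext i; ring
    rw [hexp] at hsumlt
    have hΓeq' : R c - ∑ i, b i * Real.log (c i)
        = R ystar - ∑ i, b i * Real.log (ystar i) := hΓeq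
    have hΓm : Γ m < Γ c := by
      show R m - ∑ i, b i * Real.log (m i) < R c - ∑ i, b i * Real.log (c i)
      linarith
    exact absurd (hmin_c m hmS) (not_le.mpr hΓm)
  -- ∑ ystar = l⁻¹
  have hlam : ∑ i, ystar i = l⁻¹ := by
    rw [hy_eq_c]
    simp only [hc]
    rw [← Finset.mul_sum, hθsum, mul_one]
  -- key values
  have hRc : R c = 1 := by
    rw [hc, hRhom θ (fun i => (hθ i).le) l⁻¹ (inv_nonneg.mpr hlpos.le), ← hl]
    field_simp
  set z : Fin d → ℝ := fun i => l⁻¹ * b i with hz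
  have hzpos : ∀ i, 0 < z i := fun i => mul_pos (inv_pos.mpr hlpos) (hb i)
  have hRz : R z = l⁻¹ * R b := by
    rw [hz]; exact hRhom b (fun i => (hb i).le) l⁻¹ (inv_nonneg.mpr hlpos.le)
  have hkey := hmin z hzpos
  rw [hy_eq_c] at hkey
  -- expand logs
  have hlinv : l⁻¹ ≠ 0 := inv_ne_zero (ne_of_gt hlpos)
  have hlogc : ∑ i, b i * Real.log (c i)
      = Real.log l⁻¹ + ∑ i, b i * Real.log (θ i) := by
    have hh : ∀ i, b i * Real.log (c i)
        = b i * Real.log l⁻¹ + b i * Real.log (θ i) := by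
      intro i
      rw [hc]
      rw [Real.log_mul hlinv (ne_of_gt (hθ i))]; ring
    simp_rw [hh]
    rw [Finset.sum_add_distrib, ← Finset.sum_mul, hbsum]; ring
  have hlogz : ∑ i, b i * Real.log (z i)
      = Real.log l⁻¹ + ∑ i, b i * Real.log (b i) := by
    have hh : ∀ i, b i * Real.log (z i)
        = b i * Real.log l⁻¹ + b i * Real.log (b i) := by
      intro i
      rw [hz]
      rw [Real.log_mul hlinv (ne_of_gt (hb i))]; ring
    simp_rw [hh]
    rw [Finset.sum_add_distrib, ← Finset.sum_mul, hbsum]; ring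
  have hKL : ∑ i, b i * Real.log (b i / θ i)
      = ∑ i, b i * Real.log (b i) - ∑ i, b i * Real.log (θ i) := by
    have hh : ∀ i, b i * Real.log (b i / θ i)
        = b i * Real.log (b i) - b i * Real.log (θ i) := by
      intro i
      rw [Real.log_div (ne_of_gt (hb i)) (ne_of_gt (hθ i))]; ring
    simp_rw [hh]
    rw [Finset.sum_sub_distrib]
  have hKLnn : 0 ≤ ∑ i, b i * Real.log (b i / θ i) :=
    gibbs b θ hb hθ (by rw [hθsum, hbsum])
  -- final inequality
  rw [hRc, hRz, hlogc, hlogz] at hkey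
  rw [hlam, one_div, inv_inv]
  have hkey2 : 1 - ∑ i, b i * Real.log (θ i) ≤ l⁻¹ * R b - ∑ i, b i * Real.log (b i) := by
    linarith
  have hmul := mul_le_mul_of_nonneg_left hkey2 hlpos.le
  have hll : l * (l⁻¹ * R b) = R b := by field_simp
  constructor
  · rw [hKL]
    nlinarith [hmul, hll]
  · have h0 : 0 ≤ l * ∑ i, b i * Real.log (b i / θ i) := mul_nonneg hlpos.le hKLnn
    linarith
end

section
/- (Rockafellar–Uryasev) For an integrable real-valued random variable Z and α ∈ (0,1), the Expected Shortfall ES_α(Z) = (1/(1−α)) ∫_α^1 VaR_s(Z) ds satisfies ES_α(Z) = inf over ζ ∈ ℝ of ζ + (1/(1−α)) E[(Z − ζ)₊], and the infimum is attained at ζ = VaR_α(Z). -/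
open MeasureTheory

/-- Value-at-Risk at level `s` of the loss `Z` under the probability measure `μ`. -/
noncomputable def VaR {Ω : Type*} [MeasurableSpace Ω] (μ : Measure Ω)
    (Z : Ω → ℝ) (s : ℝ) : ℝ :=
  sInf {z : ℝ | s ≤ (μ {ω | Z ω ≤ z}).toReal}

/-- Expected Shortfall at level `α` of the loss `Z` under `μ`. -/
noncomputable def ES {Ω : Type*} [MeasurableSpace Ω] (μ : Measure Ω)
    (Z : Ω → ℝ) (α : ℝ) : ℝ :=
  (1 - α)⁻¹ * ∫ s in Set.Ioc α 1, VaR μ Z s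

section Aux

open Set Filter Topology ProbabilityTheory

variable {Ω : Type*} [MeasurableSpace Ω] (μ : Measure Ω) [IsProbabilityMeasure μ]

theorem RU_aux (Z : Ω → ℝ) (hZm : Measurable Z) (hZ : Integrable Z μ)
    (α : ℝ) (hα : α ∈ Set.Ioo (0 : ℝ) 1) :
    (∀ ζ : ℝ, ES μ Z α ≤ ζ + (1 - α)⁻¹ * ∫ ω, max (Z ω - ζ) 0 ∂μ) ∧
    ES μ Z α = VaR μ Z α + (1 - α)⁻¹ * ∫ ω, max (Z ω - VaR μ Z α) 0 ∂μ := by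
  obtain ⟨hα0, hα1⟩ := hα
  set ν : Measure ℝ := μ.map Z with hν
  haveI : IsProbabilityMeasure ν := Measure.isProbabilityMeasure_map hZm.aemeasurable
  set F : ℝ → ℝ := fun u => cdf ν u with hF
  have hμF : ∀ u, μ {ω | Z ω ≤ u} = ENNReal.ofReal (F u) := by
    intro u
    rw [hF, ofReal_cdf, hν, Measure.map_apply hZm measurableSet_Iic]
    rfl
  have hF0 : ∀ u, 0 ≤ F u := fun u => cdf_nonneg (μ := ν) u
  have hF1 : ∀ u, F u ≤ 1 := fun u => cdf_le_one (μ := ν) u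
  have hFmono : Monotone F := monotone_cdf ν
  have hVaR : ∀ s, VaR μ Z s = sInf {z | s ≤ F z} := by
    intro s
    unfold VaR
    congr 1
    ext z
    simp only [mem_setOf_eq, hμF z, ENNReal.toReal_ofReal (hF0 z)]
  set Q : ℝ → ℝ := VaR μ Z with hQ
  -- bddBelow and nonempty of the level sets
  have hbdd : ∀ {s : ℝ}, 0 < s → BddBelow {z | s ≤ F z} := by
    intro s hs
    obtain ⟨M, hM⟩ := eventually_atBot.1 ((tendsto_cdf_atBot (μ := ν)).eventually_lt_const hs)
    refine ⟨M, fun z hz => ?_⟩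
    by_contra h
    exact absurd hz (not_le.2 (hM z (le_of_not_ge h)))
  have hne : ∀ {s : ℝ}, s < 1 → {z | s ≤ F z}.Nonempty := by
    intro s hs
    obtain ⟨z, hz⟩ := ((tendsto_cdf_atTop (μ := ν)).eventually_const_lt hs).exists
    exact ⟨z, hz.le⟩
  -- Galois connection
  have hgal₁ : ∀ {s u : ℝ}, 0 < s → s ≤ F u → Q s ≤ u := by
    intro s u hs hu
    rw [hVaR]
    exact csInf_le (hbdd hs) hu
  have hgal₂ : ∀ {s u : ℝ}, 0 < s → s < 1 → Q s ≤ u → s ≤ F u := by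
    intro s u hs hs1 hQu
    have htends : Tendsto F (𝓝[>] u) (𝓝 (F u)) :=
      ((cdf ν).right_continuous u).tendsto.mono_left (nhdsWithin_mono u Ioi_subset_Ici_self)
    refine ge_of_tendsto htends (eventually_nhdsWithin_of_forall fun v hv => ?_)
    have hlt : sInf {z | s ≤ F z} < v := lt_of_le_of_lt (by rw [hVaR] at hQu; exact hQu) hv
    obtain ⟨z, hz, hzv⟩ := exists_lt_of_csInf_lt (hne hs1) hlt
    exact le_trans hz (hFmono hzv.le)
  have hQmono : MonotoneOn Q (Ioo (0:ℝ) 1) := by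
    intro s hs t ht hst
    rw [hVaR, hVaR]
    exact csInf_le_csInf (hbdd hs.1) (hne ht.2) fun z hz => le_trans hst hz
  -- key set computation
  have hsetQ : ∀ u, {s | u < Q s} ∩ Ioo (0:ℝ) 1 = Ioo (F u) 1 := by
    intro u
    ext s
    simp only [mem_inter_iff, mem_setOf_eq, mem_Ioo]
    constructor
    · rintro ⟨h1, h2, h3⟩
      refine ⟨?_, h3⟩
      by_contra h
      exact absurd (hgal₁ h2 (le_of_not_gt h)) (not_le.2 h1)
    · rintro ⟨h1, h2⟩
      have hs0 : 0 < s := lt_of_le_of_lt (hF0 u) h1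
      refine ⟨?_, hs0, h2⟩
      by_contra h
      exact absurd (hgal₂ hs0 h2 (le_of_not_gt h)) (not_le.2 h1)
  have hmeas₁ : ∀ u, (volume.restrict (Ioo (0:ℝ) 1)) {s | u < Q s} = ENNReal.ofReal (1 - F u) := by
    intro u
    rw [Measure.restrict_apply' measurableSet_Ioo, hsetQ u, Real.volume_Ioo]
  have hmeas₂ : ∀ u, μ {ω | u < Z ω} = ENNReal.ofReal (1 - F u) := by
    intro u
    have hc : {ω | u < Z ω} = {ω | Z ω ≤ u}ᶜ := by ext ω; simp [not_le]
    have hms : MeasurableSet {ω | Z ω ≤ u} := hZm measurableSet_Iic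
    rw [hc, measure_compl hms (measure_ne_top μ _), measure_univ, hμF u,
      ENNReal.ofReal_sub _ (hF0 u), ENNReal.ofReal_one]
  have hQae : AEMeasurable Q (volume.restrict (Ioo (0:ℝ) 1)) :=
    aemeasurable_restrict_of_monotoneOn measurableSet_Ioo hQmono
  -- central identity via layer cake
  have hkey : ∀ ζ : ℝ, ∫⁻ s in Ioo (0:ℝ) 1, ENNReal.ofReal (max (Q s - ζ) 0)
      = ∫⁻ ω, ENNReal.ofReal (max (Z ω - ζ) 0) ∂μ := by
    intro ζ
    have hm1 : AEMeasurable (fun s => max (Q s - ζ) 0) (volume.restrict (Ioo (0:ℝ) 1)) :=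
      (hQae.sub aemeasurable_const).max aemeasurable_const
    have hm2 : AEMeasurable (fun ω => max (Z ω - ζ) 0) μ :=
      ((hZm.sub measurable_const).max measurable_const).aemeasurable
    rw [lintegral_eq_lintegral_meas_lt (f := fun s => max (Q s - ζ) 0) _
        (ae_of_all _ fun s => le_max_right (Q s - ζ) 0) hm1,
      lintegral_eq_lintegral_meas_lt (f := fun ω => max (Z ω - ζ) 0) μ
        (ae_of_all _ fun ω => le_max_right (Z ω - ζ) 0) hm2]
    refine setLIntegral_congr_fun measurableSet_Ioi (fun t (ht : 0 < t) => ?_)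
    have h1 : {s | t < max (Q s - ζ) 0} = {s | ζ + t < Q s} := by
      ext s
      simp only [mem_setOf_eq, lt_max_iff, not_lt.2 (le_of_lt ht), or_false, lt_sub_iff_add_lt']
    have h2 : {ω | t < max (Z ω - ζ) 0} = {ω | ζ + t < Z ω} := by
      ext ω
      simp only [mem_setOf_eq, lt_max_iff, not_lt.2 (le_of_lt ht), or_false, lt_sub_iff_add_lt']
    rw [h1, h2, hmeas₁, hmeas₂]
  have hfinZ : ∀ ζ : ℝ, Integrable (fun ω => max (Z ω - ζ) 0) μ :=
    fun ζ => (hZ.sub (integrable_const ζ)).pos_part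
  have hlfin : ∀ ζ : ℝ, ∫⁻ ω, ENNReal.ofReal (max (Z ω - ζ) 0) ∂μ < ⊤ := fun ζ =>
    (hasFiniteIntegral_iff_ofReal (ae_of_all _ fun ω => le_max_right _ _)).1 (hfinZ ζ).2
  have hQint : ∀ ζ : ℝ, IntegrableOn (fun s => max (Q s - ζ) 0) (Ioo (0:ℝ) 1) := by
    intro ζ
    have hm1 : AEStronglyMeasurable (fun s => max (Q s - ζ) 0) (volume.restrict (Ioo (0:ℝ) 1)) :=
      ((hQae.sub aemeasurable_const).max aemeasurable_const).aestronglyMeasurable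
    refine ⟨hm1, ?_⟩
    rw [hasFiniteIntegral_iff_ofReal (f := fun s => max (Q s - ζ) 0)
      (ae_of_all _ fun s => le_max_right (Q s - ζ) 0), hkey ζ]
    exact hlfin ζ
  have heq : ∀ ζ : ℝ, ∫ s in Ioo (0:ℝ) 1, max (Q s - ζ) 0 = ∫ ω, max (Z ω - ζ) 0 ∂μ := by
    intro ζ
    have hm1 : AEStronglyMeasurable (fun s => max (Q s - ζ) 0) (volume.restrict (Ioo (0:ℝ) 1)) :=
      ((hQae.sub aemeasurable_const).max aemeasurable_const).aestronglyMeasurable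
    rw [integral_eq_lintegral_of_nonneg_ae (f := fun s => max (Q s - ζ) 0)
        (ae_of_all _ fun s => le_max_right (Q s - ζ) 0) hm1,
      integral_eq_lintegral_of_nonneg_ae (f := fun ω => max (Z ω - ζ) 0)
        (ae_of_all _ fun ω => le_max_right (Z ω - ζ) 0) (hfinZ ζ).1,
      hkey ζ]
  -- integrability of Q on (α,1)
  have hsub : Ioo α 1 ⊆ Ioo (0:ℝ) 1 := Ioo_subset_Ioo hα0.le le_rfl
  have hαmem : α ∈ Ioo (0:ℝ) 1 := ⟨hα0, hα1⟩
  set ζs : ℝ := Q α with hζs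
  have hζle : ∀ s ∈ Ioo α 1, ζs ≤ Q s := fun s hs =>
    hQmono hαmem (hsub hs) hs.1.le
  have hQIα : IntegrableOn Q (Ioo α 1) := by
    have hmQ : AEMeasurable Q (volume.restrict (Ioo α 1)) :=
      aemeasurable_restrict_of_monotoneOn measurableSet_Ioo (hQmono.mono hsub)
    have hcst : IntegrableOn (fun _ : ℝ => |ζs|) (Ioo α 1) := by
      refine integrableOn_const ?_
      rw [Real.volume_Ioo]; exact ENNReal.ofReal_lt_top.ne
    refine Integrable.mono (hcst.add ((hQint ζs).mono_set hsub))
      hmQ.aestronglyMeasurable ?_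
    filter_upwards [ae_restrict_mem measurableSet_Ioo] with s hs
    have h1 : ζs ≤ Q s := hζle s hs
    have h2 : (0:ℝ) ≤ max (Q s - ζs) 0 := le_max_right _ _
    have h3 : Q s - ζs ≤ max (Q s - ζs) 0 := le_max_left _ _
    have hb : |Q s| ≤ |ζs| + max (Q s - ζs) 0 := by
      rw [abs_le]
      constructor
      · linarith [neg_abs_le ζs]
      · linarith [le_abs_self ζs]
    calc ‖Q s‖ = |Q s| := Real.norm_eq_abs _
      _ ≤ |ζs| + max (Q s - ζs) 0 := hb
      _ ≤ ‖((fun _ : ℝ => |ζs|) + fun s => max (Q s - ζs) 0) s‖ := by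
          rw [Real.norm_eq_abs, Pi.add_apply]; exact le_abs_self _
  have hvol : (volume (Ioo α 1)).toReal = 1 - α := by
    rw [Real.volume_Ioo, ENNReal.toReal_ofReal (by linarith)]
  have hconst : ∀ c : ℝ, ∫ _s in Ioo α 1, c = (1 - α) * c := by
    intro c
    rw [setIntegral_const, measureReal_def, hvol, smul_eq_mul]
  have hsubint : ∀ ζ : ℝ, ∫ s in Ioo α 1, (Q s - ζ) = (∫ s in Ioo α 1, Q s) - (1 - α) * ζ := by
    intro ζ
    rw [integral_sub hQIα (integrableOn_const (by
      rw [Real.volume_Ioo]; exact ENNReal.ofReal_lt_top.ne)), hconst]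
  -- the split identity at ζs
  have hsplit : ∫ s in Ioo (0:ℝ) 1, max (Q s - ζs) 0 = ∫ s in Ioo α 1, (Q s - ζs) := by
    have hunion : Ioo (0:ℝ) 1 = Ioc 0 α ∪ Ioo α 1 := by
      ext s
      simp only [mem_Ioo, mem_Ioc, mem_union]
      constructor
      · rintro ⟨h1, h2⟩
        rcases le_or_gt s α with h | h
        · exact Or.inl ⟨h1, h⟩
        · exact Or.inr ⟨h, h2⟩
      · rintro (⟨h1, h2⟩ | ⟨h1, h2⟩)
        · exact ⟨h1, lt_of_le_of_lt h2 hα1⟩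
        · exact ⟨lt_trans hα0 h1, h2⟩
    have hdisj : Disjoint (Ioc (0:ℝ) α) (Ioo α 1) := by
      rw [Set.disjoint_left]
      rintro s ⟨_, h2⟩ ⟨h3, _⟩
      exact absurd h3 (not_lt.2 h2)
    have hIoc : Ioc (0:ℝ) α ⊆ Ioo (0:ℝ) 1 := fun s hs => ⟨hs.1, lt_of_le_of_lt hs.2 hα1⟩
    rw [hunion, setIntegral_union hdisj measurableSet_Ioo ((hQint ζs).mono_set hIoc)
      ((hQint ζs).mono_set hsub)]
    have e1 : ∫ s in Ioc (0:ℝ) α, max (Q s - ζs) 0 = 0 := by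
      rw [setIntegral_congr_fun measurableSet_Ioc (g := fun _ => (0:ℝ))
        (fun s hs => max_eq_right (sub_nonpos.2 (hQmono (hIoc hs) hαmem hs.2)))]
      exact integral_zero _ _
    have e2 : ∫ s in Ioo α 1, max (Q s - ζs) 0 = ∫ s in Ioo α 1, (Q s - ζs) :=
      setIntegral_congr_fun measurableSet_Ioo
        (fun s hs => max_eq_left (sub_nonneg.2 (hζle s hs)))
    rw [e1, e2, zero_add]
  have hES : ES μ Z α = (1 - α)⁻¹ * ∫ s in Ioo α 1, Q s := by
    unfold ES
    rw [setIntegral_congr_set (Ioo_ae_eq_Ioc (a := α) (b := (1:ℝ))).symm]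
  have h1α : (0:ℝ) < 1 - α := by linarith
  have hinv : (1 - α)⁻¹ * (1 - α) = 1 := inv_mul_cancel₀ h1α.ne'
  constructor
  · intro ζ
    have step1 : ∫ s in Ioo α 1, (Q s - ζ) ≤ ∫ s in Ioo α 1, max (Q s - ζ) 0 :=
      integral_mono (hQIα.sub (integrableOn_const (by
        rw [Real.volume_Ioo]; exact ENNReal.ofReal_lt_top.ne)))
        ((hQint ζ).mono_set hsub) (fun s => le_max_left _ _)
    have step2 : ∫ s in Ioo α 1, max (Q s - ζ) 0 ≤ ∫ s in Ioo (0:ℝ) 1, max (Q s - ζ) 0 :=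
      setIntegral_mono_set (hQint ζ) (ae_of_all _ fun s => le_max_right _ _)
        (HasSubset.Subset.eventuallyLE hsub)
    have hE : (∫ s in Ioo α 1, Q s) - (1 - α) * ζ ≤ ∫ ω, max (Z ω - ζ) 0 ∂μ := by
      rw [← heq ζ, ← hsubint ζ]
      exact le_trans step1 step2
    rw [hES]
    have hmul := mul_le_mul_of_nonneg_left hE (inv_nonneg.2 h1α.le)
    have hexp : (1 - α)⁻¹ * ((∫ s in Ioo α 1, Q s) - (1 - α) * ζ)
        = (1 - α)⁻¹ * (∫ s in Ioo α 1, Q s) - ζ := by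
      field_simp
    rw [hexp] at hmul
    linarith
  · have hmain : ∫ ω, max (Z ω - ζs) 0 ∂μ = (∫ s in Ioo α 1, Q s) - (1 - α) * ζs := by
      rw [← heq ζs, hsplit, hsubint ζs]
    show ES μ Z α = ζs + (1 - α)⁻¹ * ∫ ω, max (Z ω - ζs) 0 ∂μ
    rw [hES, hmain]
    field_simp
    ring
end Aux

/-- Rockafellar–Uryasev: `ES_α(Z) = inf_ζ (ζ + (1/(1-α)) E[(Z-ζ)₊])`, the infimum
being attained at `ζ = VaR_α(Z)`. -/
theorem rockafellar_uryasev {Ω : Type*} [MeasurableSpace Ω] (μ : Measure Ω)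
    [IsProbabilityMeasure μ] (Z : Ω → ℝ) (hZ : Integrable Z μ)
    (α : ℝ) (hα : α ∈ Set.Ioo (0 : ℝ) 1) :
    ES μ Z α = ⨅ ζ : ℝ, (ζ + (1 - α)⁻¹ * ∫ ω, max (Z ω - ζ) 0 ∂μ) ∧
    ES μ Z α = VaR μ Z α + (1 - α)⁻¹ * ∫ ω, max (Z ω - VaR μ Z α) 0 ∂μ := by
  set Z' : Ω → ℝ := hZ.1.mk Z with hZ'
  have hmeas : Measurable Z' := hZ.1.stronglyMeasurable_mk.measurable
  have hae : Z =ᵐ[μ] Z' := hZ.1.ae_eq_mk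
  have hVaReq : VaR μ Z = VaR μ Z' := by
    funext s
    unfold VaR
    congr 1
    ext z
    have hmeq : μ {ω | Z ω ≤ z} = μ {ω | Z' ω ≤ z} :=
      measure_congr (Filter.eventuallyEq_set.2 (hae.mono fun ω hω => by
        simp only [Set.mem_setOf_eq, hω]))
    simp only [Set.mem_setOf_eq, hmeq]
  have hESeq : ES μ Z α = ES μ Z' α := by
    unfold ES
    rw [hVaReq]
  have hinteq : ∀ ζ : ℝ, ∫ ω, max (Z ω - ζ) 0 ∂μ = ∫ ω, max (Z' ω - ζ) 0 ∂μ := fun ζ =>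
    integral_congr_ae (hae.mono fun ω hω => by simp only [hω])
  obtain ⟨h1, h2⟩ := RU_aux μ Z' hmeas (hZ.congr hae) α hα
  have hle : ∀ ζ : ℝ, ES μ Z α ≤ ζ + (1 - α)⁻¹ * ∫ ω, max (Z ω - ζ) 0 ∂μ := by
    intro ζ
    rw [hESeq, hinteq ζ]
    exact h1 ζ
  have hstmt2 : ES μ Z α = VaR μ Z α + (1 - α)⁻¹ * ∫ ω, max (Z ω - VaR μ Z α) 0 ∂μ := by
    rw [hESeq, hVaReq, hinteq]
    exact h2
  refine ⟨le_antisymm (le_ciInf hle) ?_, hstmt2⟩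
  have hbdd : BddBelow (Set.range fun ζ : ℝ => ζ + (1 - α)⁻¹ * ∫ ω, max (Z ω - ζ) 0 ∂μ) := by
    refine ⟨ES μ Z α, ?_⟩
    rintro x ⟨ζ, rfl⟩
    exact hle ζ
  exact ciInf_le_of_le hbdd (VaR μ Z α) hstmt2.ge
end

section
/- Let u(ξ) = aξ₊ − bξ₋ with 0 ≤ a < 1 < b. Then the optimized certainty equivalent risk measure ρ(Z) = inf over ζ ∈ ℝ of (ζ − E[u(−Z+ζ)]) satisfies ρ(Z) = a·E[Z] + (1−a)·ES_{(b−1)/(b−a)}(Z) for every integrable random variable Z. -/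
open MeasureTheory

open Set Filter Topology

section CDF

variable {Ω : Type*} [MeasurableSpace Ω] (μ : Measure Ω) [IsProbabilityMeasure μ]
  (Z : Ω → ℝ)

/-- The CDF of `Z`. -/
noncomputable def Fcdf (z : ℝ) : ℝ := (μ {ω | Z ω ≤ z}).toReal

lemma Fcdf_mono : Monotone (Fcdf μ Z) := fun x y hxy =>
  ENNReal.toReal_mono (measure_ne_top μ _)
    (measure_mono fun ω (h : Z ω ≤ x) => le_trans h hxy)

lemma Fcdf_nonneg (z : ℝ) : 0 ≤ Fcdf μ Z z := ENNReal.toReal_nonneg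

lemma Fcdf_le_one (z : ℝ) : Fcdf μ Z z ≤ 1 := by
  rw [Fcdf, ← ENNReal.toReal_one]
  exact ENNReal.toReal_mono ENNReal.one_ne_top (prob_le_one)

lemma exists_Fcdf_lt (hZm : Measurable Z) {s : ℝ} (hs : 0 < s) : ∃ z, Fcdf μ Z z < s := by
  have h1 : Tendsto (fun n : ℕ => μ {ω | Z ω ≤ -(n : ℝ)}) atTop (𝓝 (μ (⋂ n : ℕ, {ω | Z ω ≤ -(n : ℝ)}))) := by
    have := tendsto_measure_iInter_atTop (μ := μ) (s := fun n : ℕ => {ω | Z ω ≤ -(n : ℝ)})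
      (fun i => (measurableSet_le hZm measurable_const).nullMeasurableSet) ?_ ?_
    · exact this
    · intro i j hij
      exact fun ω (h : Z ω ≤ -(j:ℝ)) => le_trans h (by exact_mod_cast neg_le_neg (by exact_mod_cast hij))
    · exact ⟨0, measure_ne_top μ _⟩
  have h2 : (⋂ n : ℕ, {ω | Z ω ≤ -(n : ℝ)}) = ∅ := by
    ext ω
    simp only [mem_iInter, mem_setOf_eq, mem_empty_iff_false, iff_false, not_forall]
    obtain ⟨n, hn⟩ := exists_nat_gt (-Z ω)
    exact ⟨n, by linarith⟩
  rw [h2, measure_empty] at h1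
  have h3 : Tendsto (fun n : ℕ => Fcdf μ Z (-(n:ℝ))) atTop (𝓝 0) := by
    have := (ENNReal.tendsto_toReal (a := 0) (by simp)).comp h1
    exact this
  obtain ⟨n, hn⟩ := (h3.eventually (eventually_lt_nhds hs)).exists
  exact ⟨-(n:ℝ), hn⟩

lemma exists_le_Fcdf {s : ℝ} (hs : s < 1) : ∃ z, s ≤ Fcdf μ Z z := by
  have h1 : Tendsto (fun n : ℕ => μ {ω | Z ω ≤ (n : ℝ)}) atTop (𝓝 (μ (⋃ n : ℕ, {ω | Z ω ≤ (n : ℝ)}))) := by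
    exact tendsto_measure_iUnion_atTop fun i j hij ω (h : Z ω ≤ (i:ℝ)) => le_trans h (by exact_mod_cast hij)
  have h2 : (⋃ n : ℕ, {ω | Z ω ≤ (n : ℝ)}) = univ := by
    ext ω
    simp only [mem_iUnion, mem_setOf_eq, mem_univ, iff_true]
    obtain ⟨n, hn⟩ := exists_nat_gt (Z ω)
    exact ⟨n, hn.le⟩
  rw [h2, measure_univ] at h1
  have h3 : Tendsto (fun n : ℕ => Fcdf μ Z ((n:ℝ))) atTop (𝓝 1) := by
    have := (ENNReal.tendsto_toReal (a := 1) (by simp)).comp h1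
    exact this
  obtain ⟨n, hn⟩ := (h3.eventually (eventually_gt_nhds hs)).exists
  exact ⟨(n:ℝ), hn.le⟩

end CDF

section Quantile

variable {Ω : Type*} [MeasurableSpace Ω] (μ : Measure Ω) [IsProbabilityMeasure μ]
  (Z : Ω → ℝ) (hZm : Measurable Z)

lemma VaR_set_nonempty {s : ℝ} (hs : s < 1) :
    {z : ℝ | s ≤ Fcdf μ Z z}.Nonempty := exists_le_Fcdf μ Z hs

lemma VaR_set_bddBelow (hZm : Measurable Z) {s : ℝ} (hs : 0 < s) :
    BddBelow {z : ℝ | s ≤ Fcdf μ Z z} := by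
  obtain ⟨z₀, hz₀⟩ := exists_Fcdf_lt μ Z hZm hs
  refine ⟨z₀, fun z hz => ?_⟩
  by_contra h
  push_neg at h
  exact absurd (hz : s ≤ Fcdf μ Z z) (not_le.2 (lt_of_le_of_lt (Fcdf_mono μ Z h.le) hz₀))

lemma VaR_eq_sInf (s : ℝ) : VaR μ Z s = sInf {z : ℝ | s ≤ Fcdf μ Z z} := rfl

lemma le_Fcdf_VaR (hZm : Measurable Z) {s : ℝ} (hs : 0 < s) (hs1 : s < 1) :
    s ≤ Fcdf μ Z (VaR μ Z s) := by
  set S := {z : ℝ | s ≤ Fcdf μ Z z} with hS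
  have hne := VaR_set_nonempty μ Z hs1
  have key : ∀ n : ℕ, s ≤ Fcdf μ Z (VaR μ Z s + 1/(n+1)) := by
    intro n
    have hlt : sInf S < VaR μ Z s + 1/(n+1) := by
      rw [VaR_eq_sInf]
      have : (0:ℝ) < 1/((n:ℝ)+1) := by positivity
      linarith
    obtain ⟨z, hzS, hz⟩ := exists_lt_of_csInf_lt hne hlt
    exact le_trans hzS (Fcdf_mono μ Z hz.le)
  -- continuity from above
  have hmono : Antitone (fun n : ℕ => {ω | Z ω ≤ VaR μ Z s + 1/((n:ℝ)+1)}) := by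
    intro i j hij ω (h : Z ω ≤ _)
    have hc : (i:ℝ) ≤ (j:ℝ) := by exact_mod_cast hij
    have : 1/((j:ℝ)+1) ≤ 1/((i:ℝ)+1) := by
      apply one_div_le_one_div_of_le <;> linarith
    exact le_trans h (by linarith)
  have hiInt : (⋂ n : ℕ, {ω | Z ω ≤ VaR μ Z s + 1/((n:ℝ)+1)}) = {ω | Z ω ≤ VaR μ Z s} := by
    ext ω
    simp only [mem_iInter, mem_setOf_eq]
    constructor
    · intro h
      have hlim : Tendsto (fun n : ℕ => VaR μ Z s + 1/((n:ℝ)+1)) atTop (𝓝 (VaR μ Z s)) := by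
        have := tendsto_one_div_add_atTop_nhds_zero_nat (𝕜 := ℝ)
        simpa using tendsto_const_nhds.add this
      exact ge_of_tendsto hlim (Eventually.of_forall h)
    · intro h n
      have : (0:ℝ) < 1/((n:ℝ)+1) := by positivity
      linarith
  have htend : Tendsto (fun n : ℕ => μ {ω | Z ω ≤ VaR μ Z s + 1/((n:ℝ)+1)}) atTop
      (𝓝 (μ {ω | Z ω ≤ VaR μ Z s})) := by
    have := tendsto_measure_iInter_atTop (μ := μ)
      (s := fun n : ℕ => {ω | Z ω ≤ VaR μ Z s + 1/((n:ℝ)+1)})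
      (fun i => (measurableSet_le hZm measurable_const).nullMeasurableSet) hmono
      ⟨0, measure_ne_top μ _⟩
    rw [hiInt] at this
    exact this
  have htendR : Tendsto (fun n : ℕ => Fcdf μ Z (VaR μ Z s + 1/((n:ℝ)+1))) atTop
      (𝓝 (Fcdf μ Z (VaR μ Z s))) := by
    exact (ENNReal.tendsto_toReal (measure_ne_top μ _)).comp htend
  exact ge_of_tendsto' htendR key

/-- Galois connection between VaR and CDF. -/
lemma VaR_le_iff (hZm : Measurable Z) {s z : ℝ} (hs : 0 < s) (hs1 : s < 1) :
    VaR μ Z s ≤ z ↔ s ≤ Fcdf μ Z z := by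
  constructor
  · intro h
    exact le_trans (le_Fcdf_VaR μ Z hZm hs hs1) (Fcdf_mono μ Z h)
  · intro h
    exact csInf_le (VaR_set_bddBelow μ Z hZm hs) h

lemma VaR_monotoneOn (hZm : Measurable Z) : MonotoneOn (VaR μ Z) (Ioo 0 1) := by
  intro s₁ hs₁ s₂ hs₂ h12
  rw [VaR_le_iff μ Z hZm hs₁.1 hs₁.2]
  exact le_trans h12 (le_Fcdf_VaR μ Z hZm hs₂.1 hs₂.2)

/-- The level sets of VaR within (0,1). -/
lemma VaR_level_set (hZm : Measurable Z) (z : ℝ) :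
    Ioo (0:ℝ) 1 ∩ {s | z < VaR μ Z s} = Ioo (Fcdf μ Z z) 1 := by
  ext s
  simp only [mem_inter_iff, mem_Ioo, mem_setOf_eq]
  constructor
  · rintro ⟨⟨h0, h1⟩, hz⟩
    refine ⟨?_, h1⟩
    by_contra h
    push_neg at h
    exact absurd ((VaR_le_iff μ Z hZm h0 h1).2 h) (not_le.2 hz)
  · rintro ⟨hF, h1⟩
    have h0 : 0 < s := lt_of_le_of_lt (Fcdf_nonneg μ Z z) hF
    refine ⟨⟨h0, h1⟩, ?_⟩
    by_contra h
    push_neg at h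
    exact absurd ((VaR_le_iff μ Z hZm h0 h1).1 h) (not_le.2 hF)

end Quantile

section Dist

variable {Ω : Type*} [MeasurableSpace Ω] (μ : Measure Ω) [IsProbabilityMeasure μ]
  (Z : Ω → ℝ)

lemma VaR_level_meas (hZm : Measurable Z) (z : ℝ) :
    (volume.restrict (Ioo (0:ℝ) 1)) {s | z < VaR μ Z s} = μ {ω | z < Z ω} := by
  rw [Measure.restrict_apply' measurableSet_Ioo]
  rw [inter_comm, VaR_level_set μ Z hZm z]
  have hcompl : {ω | z < Z ω} = {ω | Z ω ≤ z}ᶜ := by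
    ext ω; simp [not_le]
  rw [hcompl, measure_compl (measurableSet_le hZm measurable_const) (measure_ne_top μ _)]
  rw [measure_univ, Real.volume_Ioo]
  have h1 : μ {ω | Z ω ≤ z} = ENNReal.ofReal (Fcdf μ Z z) :=
    (ENNReal.ofReal_toReal (measure_ne_top μ _)).symm
  rw [h1, ← ENNReal.ofReal_one, ← ENNReal.ofReal_sub _ (Fcdf_nonneg μ Z z)]

lemma VaR_aemeasurable (hZm : Measurable Z) :
    AEMeasurable (VaR μ Z) (volume.restrict (Ioo (0:ℝ) 1)) :=
  aemeasurable_restrict_of_monotoneOn measurableSet_Ioo (VaR_monotoneOn μ Z hZm)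

lemma lintegral_pos_part_eq (hZm : Measurable Z) (ζ : ℝ) :
    ∫⁻ s in Ioo (0:ℝ) 1, ENNReal.ofReal (max (VaR μ Z s - ζ) 0)
      = ∫⁻ ω, ENNReal.ofReal (max (Z ω - ζ) 0) ∂μ := by
  rw [lintegral_eq_lintegral_meas_lt _ (f := fun s => max (VaR μ Z s - ζ) 0) (ae_of_all _ fun s => le_max_right _ 0)
    (((VaR_aemeasurable μ Z hZm).sub aemeasurable_const).max aemeasurable_const),
    lintegral_eq_lintegral_meas_lt μ (f := fun ω => max (Z ω - ζ) 0) (ae_of_all _ fun ω => le_max_right _ 0)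
    ((hZm.sub measurable_const).max measurable_const).aemeasurable]
  apply setLIntegral_congr_fun measurableSet_Ioi
  intro t ht
  have h1 : {s : ℝ | t < max (VaR μ Z s - ζ) 0} = {s | ζ + t < VaR μ Z s} := by
    ext s
    simp only [mem_setOf_eq, lt_max_iff]
    constructor
    · rintro (h | h)
      · linarith
      · exact absurd ht (by simpa using h.le)
    · intro h; left; linarith
  have h2 : {ω | t < max (Z ω - ζ) 0} = {ω | ζ + t < Z ω} := by
    ext ω
    simp only [mem_setOf_eq, lt_max_iff]
    constructor
    · rintro (h | h)
      · linarith
      · exact absurd ht (by simpa using h.le)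
    · intro h; left; linarith
  beta_reduce
  rw [h1, h2, VaR_level_meas μ Z hZm]

lemma integrableOn_VaR_pos_part (hZm : Measurable Z) (hZ : Integrable Z μ) (ζ : ℝ) :
    IntegrableOn (fun s => max (VaR μ Z s - ζ) 0) (Ioo (0:ℝ) 1) := by
  constructor
  · exact (((VaR_aemeasurable μ Z hZm).sub aemeasurable_const).max
      aemeasurable_const).aestronglyMeasurable
  · rw [hasFiniteIntegral_iff_ofReal (ae_of_all _ fun s => le_max_right _ 0)]
    rw [lintegral_pos_part_eq μ Z hZm ζ]
    have hint : Integrable (fun ω => max (Z ω - ζ) 0) μ := (hZ.sub (integrable_const ζ)).pos_part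
    exact hint.lintegral_lt_top

lemma integral_pos_part_eq (hZm : Measurable Z) (hZ : Integrable Z μ) (ζ : ℝ) :
    ∫ s in Ioo (0:ℝ) 1, max (VaR μ Z s - ζ) 0 = ∫ ω, max (Z ω - ζ) 0 ∂μ := by
  have hint : Integrable (fun ω => max (Z ω - ζ) 0) μ := (hZ.sub (integrable_const ζ)).pos_part
  rw [integral_eq_lintegral_of_nonneg_ae (ae_of_all _ fun s => le_max_right _ 0)
      (integrableOn_VaR_pos_part μ Z hZm hZ ζ).1,
    integral_eq_lintegral_of_nonneg_ae (ae_of_all _ fun ω => le_max_right _ 0) hint.1,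
    lintegral_pos_part_eq μ Z hZm ζ]

end Dist

section RU

variable {Ω : Type*} [MeasurableSpace Ω] (μ : Measure Ω) [IsProbabilityMeasure μ]
  (Z : Ω → ℝ)

lemma integrableOn_VaR (hZm : Measurable Z) (hZ : Integrable Z μ) {α : ℝ}
    (hα : α ∈ Ioo (0:ℝ) 1) : IntegrableOn (VaR μ Z) (Ioo α 1) := by
  have hsub : Ioo α 1 ⊆ Ioo (0:ℝ) 1 := Ioo_subset_Ioo hα.1.le le_rfl
  have hg : IntegrableOn (fun s => |VaR μ Z α| + max (VaR μ Z s - VaR μ Z α) 0) (Ioo α 1) :=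
    (integrableOn_const (by rw [Real.volume_Ioo]; exact ENNReal.ofReal_ne_top)).add
      ((integrableOn_VaR_pos_part μ Z hZm hZ (VaR μ Z α)).mono_set hsub)
  refine Integrable.mono' hg
    (aemeasurable_restrict_of_monotoneOn measurableSet_Ioo
      ((VaR_monotoneOn μ Z hZm).mono hsub)).aestronglyMeasurable ?_
  rw [ae_restrict_iff' measurableSet_Ioo]
  apply ae_of_all
  intro s hs
  have hs01 : s ∈ Ioo (0:ℝ) 1 := hsub hs
  have hqa : VaR μ Z α ≤ VaR μ Z s := (VaR_monotoneOn μ Z hZm) hα hs01 hs.1.le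
  rw [Real.norm_eq_abs, abs_le]
  constructor
  · have := abs_nonneg (VaR μ Z α)
    have := le_max_right (VaR μ Z s - VaR μ Z α) 0
    have := neg_abs_le (VaR μ Z α)
    linarith
  · have := le_abs_self (VaR μ Z α)
    have := le_max_left (VaR μ Z s - VaR μ Z α) 0
    linarith

lemma RU_ge (hZm : Measurable Z) (hZ : Integrable Z μ) {α : ℝ}
    (hα : α ∈ Ioo (0:ℝ) 1) (ζ : ℝ) :
    ∫ s in Ioo α 1, VaR μ Z s
      ≤ (1 - α) * ζ + ∫ s in Ioo (0:ℝ) 1, max (VaR μ Z s - ζ) 0 := by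
  have hsub : Ioo α 1 ⊆ Ioo (0:ℝ) 1 := Ioo_subset_Ioo hα.1.le le_rfl
  have hiq := integrableOn_VaR μ Z hZm hZ hα
  have hic : IntegrableOn (fun _ : ℝ => ζ) (Ioo α 1) :=
    integrableOn_const (by rw [Real.volume_Ioo]; exact ENNReal.ofReal_ne_top)
  have h1 : ∫ s in Ioo α 1, (VaR μ Z s - ζ)
      = (∫ s in Ioo α 1, VaR μ Z s) - (1 - α) * ζ := by
    rw [integral_sub hiq hic, setIntegral_const, measureReal_def, Real.volume_Ioo,
      ENNReal.toReal_ofReal (by linarith [hα.2]), smul_eq_mul]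
    skip
  have h2 : ∫ s in Ioo α 1, (VaR μ Z s - ζ) ≤ ∫ s in Ioo α 1, max (VaR μ Z s - ζ) 0 :=
    integral_mono (hiq.sub hic)
      ((integrableOn_VaR_pos_part μ Z hZm hZ ζ).mono_set hsub)
      (fun s => le_max_left _ _)
  have h3 : ∫ s in Ioo α 1, max (VaR μ Z s - ζ) 0
      ≤ ∫ s in Ioo (0:ℝ) 1, max (VaR μ Z s - ζ) 0 := by
    have hu : Ioo (0:ℝ) 1 = Ioc 0 α ∪ Ioo α 1 := (Ioc_union_Ioo_eq_Ioo hα.1.le hα.2).symm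
    have hdisj : Disjoint (Ioc (0:ℝ) α) (Ioo α 1) :=
      Set.disjoint_left.2 fun s hs1 hs2 => absurd hs1.2 (not_le.2 hs2.1)
    have hj1 : IntegrableOn (fun s => max (VaR μ Z s - ζ) 0) (Ioc (0:ℝ) α) :=
      (integrableOn_VaR_pos_part μ Z hZm hZ ζ).mono_set
        (fun s hs => ⟨hs.1, lt_of_le_of_lt hs.2 hα.2⟩)
    have hj2 : IntegrableOn (fun s => max (VaR μ Z s - ζ) 0) (Ioo α 1) :=
      (integrableOn_VaR_pos_part μ Z hZm hZ ζ).mono_set hsub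
    rw [hu, setIntegral_union hdisj measurableSet_Ioo hj1 hj2]
    have hpos : 0 ≤ ∫ s in Ioc (0:ℝ) α, max (VaR μ Z s - ζ) 0 :=
      setIntegral_nonneg measurableSet_Ioc (fun s _ => le_max_right _ 0)
    linarith
  linarith

lemma RU_le_aux (hZm : Measurable Z) (hZ : Integrable Z μ) {α t : ℝ}
    (hα : α ∈ Ioo (0:ℝ) 1) (ht : t ∈ Ioo α 1) :
    (1 - α) * VaR μ Z t + ∫ s in Ioo (0:ℝ) 1, max (VaR μ Z s - VaR μ Z t) 0
      ≤ (∫ s in Ioo α 1, VaR μ Z s) + (t - α) * (VaR μ Z t - VaR μ Z α) := by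
  have ht01 : t ∈ Ioo (0:ℝ) 1 := ⟨lt_trans hα.1 ht.1, ht.2⟩
  have hsubt : Ioo t 1 ⊆ Ioo (0:ℝ) 1 := Ioo_subset_Ioo ht01.1.le le_rfl
  have hsubα : Ioo α 1 ⊆ Ioo (0:ℝ) 1 := Ioo_subset_Ioo hα.1.le le_rfl
  set q := VaR μ Z with hq
  -- split Ioo 0 1 = Ioc 0 t ∪ Ioo t 1
  have hu1 : Ioo (0:ℝ) 1 = Ioc 0 t ∪ Ioo t 1 := (Ioc_union_Ioo_eq_Ioo ht01.1.le ht01.2).symm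
  have hdisj1 : Disjoint (Ioc (0:ℝ) t) (Ioo t 1) :=
    Set.disjoint_left.2 fun s hs1 hs2 => absurd hs1.2 (not_le.2 hs2.1)
  have hi1 : IntegrableOn (fun s => max (q s - q t) 0) (Ioc (0:ℝ) t) :=
    (integrableOn_VaR_pos_part μ Z hZm hZ (q t)).mono_set
      (fun s hs => ⟨hs.1, lt_of_le_of_lt hs.2 ht01.2⟩)
  have hi2 : IntegrableOn (fun s => max (q s - q t) 0) (Ioo t 1) :=
    (integrableOn_VaR_pos_part μ Z hZm hZ (q t)).mono_set hsubt
  have hz1 : ∫ s in Ioc (0:ℝ) t, max (q s - q t) 0 = 0 := by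
    rw [setIntegral_congr_fun measurableSet_Ioc
      (fun s hs => max_eq_right (sub_nonpos.2
        ((VaR_monotoneOn μ Z hZm) ⟨hs.1, lt_of_le_of_lt hs.2 ht01.2⟩ ht01 hs.2)))]
    simp
  have hz2 : ∫ s in Ioo t 1, max (q s - q t) 0 = ∫ s in Ioo t 1, (q s - q t) := by
    refine setIntegral_congr_fun measurableSet_Ioo (fun s hs => max_eq_left (sub_nonneg.2
      ((VaR_monotoneOn μ Z hZm) ht01 (hsubt hs) hs.1.le)))
  have hiqt : IntegrableOn q (Ioo t 1) := integrableOn_VaR μ Z hZm hZ ht01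
  have hict : IntegrableOn (fun _ : ℝ => q t) (Ioo t 1) :=
    integrableOn_const (by rw [Real.volume_Ioo]; exact ENNReal.ofReal_ne_top)
  have hsplit1 : ∫ s in Ioo (0:ℝ) 1, max (q s - q t) 0
      = (∫ s in Ioo t 1, q s) - (1 - t) * q t := by
    rw [hu1, setIntegral_union hdisj1 measurableSet_Ioo hi1 hi2, hz1, hz2, zero_add,
      integral_sub hiqt hict, setIntegral_const, measureReal_def, Real.volume_Ioo,
      ENNReal.toReal_ofReal (by linarith [ht01.2]), smul_eq_mul]
    skip
  -- split Ioo α 1 = Ioc α t ∪ Ioo t 1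
  have hu2 : Ioo α 1 = Ioc α t ∪ Ioo t 1 := (Ioc_union_Ioo_eq_Ioo ht.1.le ht01.2).symm
  have hdisj2 : Disjoint (Ioc α t) (Ioo t 1) :=
    Set.disjoint_left.2 fun s hs1 hs2 => absurd hs1.2 (not_le.2 hs2.1)
  have hiqαt : IntegrableOn q (Ioc α t) :=
    (integrableOn_VaR μ Z hZm hZ hα).mono_set
      (fun s hs => ⟨hs.1, lt_of_le_of_lt hs.2 ht01.2⟩)
  have hsplit2 : ∫ s in Ioo α 1, q s = (∫ s in Ioc α t, q s) + ∫ s in Ioo t 1, q s := by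
    rw [hu2, setIntegral_union hdisj2 measurableSet_Ioo hiqαt hiqt]
  have hlow : (t - α) * q α ≤ ∫ s in Ioc α t, q s := by
    have hicα : IntegrableOn (fun _ : ℝ => q α) (Ioc α t) :=
      integrableOn_const (by rw [Real.volume_Ioc]; exact ENNReal.ofReal_ne_top)
    have := setIntegral_mono_on hicα hiqαt measurableSet_Ioc
      (fun s hs => (VaR_monotoneOn μ Z hZm) hα ⟨lt_trans hα.1 hs.1, lt_of_le_of_lt hs.2 ht01.2⟩ hs.1.le)
    rwa [setIntegral_const, measureReal_def, Real.volume_Ioc, ENNReal.toReal_ofReal (by linarith [ht.1]),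
      smul_eq_mul] at this
  have := hsplit1
  linarith [hsplit1, hsplit2, hlow]

end RU

section Final

variable {Ω : Type*} [MeasurableSpace Ω] (μ : Measure Ω) [IsProbabilityMeasure μ]
  (Z : Ω → ℝ)

theorem RU_iInf (hZm : Measurable Z) (hZ : Integrable Z μ) {α : ℝ}
    (hα : α ∈ Ioo (0:ℝ) 1) :
    (⨅ ζ : ℝ, ((1 - α) * ζ + ∫ s in Ioo (0:ℝ) 1, max (VaR μ Z s - ζ) 0))
      = ∫ s in Ioo α 1, VaR μ Z s := by
  set ψ : ℝ → ℝ := fun ζ => (1 - α) * ζ + ∫ s in Ioo (0:ℝ) 1, max (VaR μ Z s - ζ) 0 with hψ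
  set I : ℝ := ∫ s in Ioo α 1, VaR μ Z s with hI
  have hbdd : BddBelow (Set.range ψ) := by
    refine ⟨I, ?_⟩
    rintro _ ⟨ζ, rfl⟩
    exact RU_ge μ Z hZm hZ hα ζ
  apply le_antisymm
  · apply le_of_forall_pos_le_add
    intro ε hε
    set t₀ : ℝ := (α + 1)/2 with ht₀def
    have ht₀ : t₀ ∈ Ioo α 1 := ⟨by simp only [ht₀def]; linarith [hα.2], by simp only [ht₀def]; linarith [hα.2]⟩
    have ht₀01 : t₀ ∈ Ioo (0:ℝ) 1 := ⟨lt_trans hα.1 ht₀.1, ht₀.2⟩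
    set C : ℝ := VaR μ Z t₀ - VaR μ Z α with hCdef
    have hC : 0 ≤ C := sub_nonneg.2 ((VaR_monotoneOn μ Z hZm) hα ht₀01 ht₀.1.le)
    have hC1 : (0:ℝ) < C + 1 := by linarith
    set t : ℝ := min t₀ (α + ε/(C+1)) with htdef
    have ht : t ∈ Ioo α 1 :=
      ⟨lt_min ht₀.1 (by have : 0 < ε/(C+1) := div_pos hε hC1; linarith),
       lt_of_le_of_lt (min_le_left _ _) ht₀.2⟩
    have ht01 : t ∈ Ioo (0:ℝ) 1 := ⟨lt_trans hα.1 ht.1, ht.2⟩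
    have hqt : VaR μ Z t ≤ VaR μ Z t₀ :=
      (VaR_monotoneOn μ Z hZm) ht01 ht₀01 (min_le_left _ _)
    have hqa : VaR μ Z α ≤ VaR μ Z t := (VaR_monotoneOn μ Z hZm) hα ht01 ht.1.le
    have step1 : (⨅ ζ : ℝ, ψ ζ) ≤ ψ (VaR μ Z t) := ciInf_le hbdd _
    have step2 : ψ (VaR μ Z t) ≤ I + (t - α) * (VaR μ Z t - VaR μ Z α) :=
      RU_le_aux μ Z hZm hZ hα ht
    have h1 : t - α ≤ ε/(C+1) := by
      have := min_le_right t₀ (α + ε/(C+1))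
      simp only [htdef] at *
      linarith
    have h2 : (0:ℝ) ≤ t - α := by linarith [ht.1]
    have h4 : VaR μ Z t - VaR μ Z α ≤ C := by simp only [hCdef]; linarith
    have h5 : ε/(C+1) * (C+1) = ε := div_mul_cancel₀ ε hC1.ne'
    have h6 : (0:ℝ) ≤ ε/(C+1) := le_of_lt (div_pos hε hC1)
    have hmul : (t - α) * (VaR μ Z t - VaR μ Z α) ≤ (ε/(C+1)) * C :=
      mul_le_mul h1 h4 (by linarith) h6
    have h7 : (ε/(C+1)) * C ≤ ε := by nlinarith
    linarith
  · exact le_ciInf (fun ζ => RU_ge μ Z hZm hZ hα ζ)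

lemma ciInf_const_add_mul (c k : ℝ) (hk : 0 < k) (ψ : ℝ → ℝ) (hb : BddBelow (Set.range ψ)) :
    (⨅ ζ : ℝ, (c + k * ψ ζ)) = c + k * ⨅ ζ : ℝ, ψ ζ := by
  obtain ⟨m, hm⟩ := hb
  have hb' : BddBelow (Set.range fun ζ => c + k * ψ ζ) := by
    refine ⟨c + k * m, ?_⟩
    rintro _ ⟨ζ, rfl⟩
    have : m ≤ ψ ζ := hm ⟨ζ, rfl⟩
    show c + k * m ≤ c + k * ψ ζ
    nlinarith
  apply le_antisymm
  · apply le_of_forall_pos_le_add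
    intro ε hε
    have hlt : (⨅ ζ : ℝ, ψ ζ) < (⨅ ζ : ℝ, ψ ζ) + ε/k := by
      have : 0 < ε/k := div_pos hε hk
      linarith
    obtain ⟨ζ, hζ⟩ := exists_lt_of_ciInf_lt hlt
    have hle : (⨅ ζ : ℝ, (c + k * ψ ζ)) ≤ c + k * ψ ζ := ciInf_le hb' ζ
    have : k * ψ ζ ≤ k * ((⨅ ζ : ℝ, ψ ζ) + ε/k) := by
      apply mul_le_mul_of_nonneg_left hζ.le hk.le
    have hcanc : k * (ε/k) = ε := mul_div_cancel₀ ε hk.ne'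
    nlinarith
  · apply le_ciInf
    intro ζ
    have : (⨅ ζ : ℝ, ψ ζ) ≤ ψ ζ := ciInf_le ⟨m, hm⟩ ζ
    nlinarith

end Final

theorem oce_meas {Ω : Type*} [MeasurableSpace Ω] (μ : Measure Ω)
    [IsProbabilityMeasure μ] (Z : Ω → ℝ) (hZm : Measurable Z) (hZ : Integrable Z μ)
    (a b : ℝ) (ha : 0 ≤ a) (hab : a < 1) (hb : 1 < b) :
    (⨅ ζ : ℝ, (ζ - ∫ ω, (a * max (-(Z ω) + ζ) 0 - b * max (-(-(Z ω) + ζ)) 0) ∂μ))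
      = a * (∫ ω, Z ω ∂μ) + (1 - a) * ES μ Z ((b - 1) / (b - a)) := by
  have hba : (0:ℝ) < b - a := by linarith
  set α : ℝ := (b - 1) / (b - a) with hαdef
  have hα0 : 0 < α := div_pos (by linarith) hba
  have hα1 : α < 1 := (div_lt_one hba).2 (by linarith)
  have hα : α ∈ Ioo (0:ℝ) 1 := ⟨hα0, hα1⟩
  have hkey : (b - a) * (1 - α) = 1 - a := by
    rw [hαdef]; field_simp
    ring
  set E : ℝ := ∫ ω, Z ω ∂μ with hE
  have hpoint : ∀ ζ : ℝ,
      (ζ - ∫ ω, (a * max (-(Z ω) + ζ) 0 - b * max (-(-(Z ω) + ζ)) 0) ∂μ)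
        = a * E + (b - a) * ((1 - α) * ζ + ∫ ω, max (Z ω - ζ) 0 ∂μ) := by
    intro ζ
    have i1 : Integrable (fun ω => max (ζ - Z ω) 0) μ := ((integrable_const ζ).sub hZ).pos_part
    have i2 : Integrable (fun ω => max (Z ω - ζ) 0) μ := (hZ.sub (integrable_const ζ)).pos_part
    have hrw : (fun ω => a * max (-(Z ω) + ζ) 0 - b * max (-(-(Z ω) + ζ)) 0)
        = fun ω => a * max (ζ - Z ω) 0 - b * max (Z ω - ζ) 0 := by
      funext ω; ring_nf
    rw [hrw, integral_sub (i1.const_mul a) (i2.const_mul b), integral_const_mul,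
      integral_const_mul]
    have hid : ∫ ω, max (ζ - Z ω) 0 ∂μ = (ζ - E) + ∫ ω, max (Z ω - ζ) 0 ∂μ := by
      have heq : (fun ω => max (ζ - Z ω) 0) = fun ω => (ζ - Z ω) + max (Z ω - ζ) 0 := by
        funext ω
        rcases le_total (Z ω) ζ with h | h
        · rw [max_eq_left (by linarith), max_eq_right (by linarith)]; ring
        · rw [max_eq_right (by linarith), max_eq_left (by linarith)]; ring
      have hadd : ∫ ω, ((ζ - Z ω) + max (Z ω - ζ) 0) ∂μ
          = (∫ ω, (ζ - Z ω) ∂μ) + ∫ ω, max (Z ω - ζ) 0 ∂μ :=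
        integral_add ((integrable_const ζ).sub hZ) i2
      have hsub : ∫ ω, (ζ - Z ω) ∂μ = ζ - E := by
        have := integral_sub (integrable_const ζ) hZ
        simp only [integral_const, probReal_univ, measure_univ, ENNReal.toReal_one, one_smul] at this
        exact this
      rw [heq, hadd, hsub]
    rw [hid]
    have hkeyζ : ((b - a) * (1 - α)) * ζ = (1 - a) * ζ := by rw [hkey]
    set P : ℝ := ∫ ω, max (Z ω - ζ) 0 ∂μ
    nlinarith [hkeyζ]
  calc (⨅ ζ : ℝ, (ζ - ∫ ω, (a * max (-(Z ω) + ζ) 0 - b * max (-(-(Z ω) + ζ)) 0) ∂μ))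
      = ⨅ ζ : ℝ, (a * E + (b - a) * ((1 - α) * ζ + ∫ s in Ioo (0:ℝ) 1, max (VaR μ Z s - ζ) 0)) := by
        apply iInf_congr
        intro ζ
        rw [hpoint ζ, integral_pos_part_eq μ Z hZm hZ ζ]
    _ = a * E + (b - a) * ⨅ ζ : ℝ, ((1 - α) * ζ + ∫ s in Ioo (0:ℝ) 1, max (VaR μ Z s - ζ) 0) := by
        apply ciInf_const_add_mul _ _ hba
        exact ⟨∫ s in Ioo α 1, VaR μ Z s, by
          rintro _ ⟨ζ, rfl⟩
          exact RU_ge μ Z hZm hZ hα ζ⟩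
    _ = a * E + (b - a) * ∫ s in Ioo α 1, VaR μ Z s := by
        rw [RU_iInf μ Z hZm hZ hα]
    _ = a * E + (1 - a) * ES μ Z α := by
        rw [ES, integral_Ioc_eq_integral_Ioo]
        have h1α : (0:ℝ) < 1 - α := by linarith
        have : (1 - a) * (1 - α)⁻¹ = b - a := by
          rw [← hkey]; field_simp
        rw [← mul_assoc, this]

/-- The optimized certainty equivalent risk measure associated with
`u(ξ) = a ξ₊ - b ξ₋`, `0 ≤ a < 1 < b`, is a convex combination of expectation and
Expected Shortfall at level `(b-1)/(b-a)`. -/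
theorem oce_is_mixture {Ω : Type*} [MeasurableSpace Ω] (μ : Measure Ω)
    [IsProbabilityMeasure μ] (Z : Ω → ℝ) (hZ : Integrable Z μ)
    (a b : ℝ) (ha : 0 ≤ a) (hab : a < 1) (hb : 1 < b) :
    (⨅ ζ : ℝ, (ζ - ∫ ω, (a * max (-(Z ω) + ζ) 0 - b * max (-(-(Z ω) + ζ)) 0) ∂μ))
      = a * (∫ ω, Z ω ∂μ) + (1 - a) * ES μ Z ((b - 1) / (b - a)) := by
  set Z' : Ω → ℝ := hZ.1.mk Z with hZ'def
  have hae : Z =ᵐ[μ] Z' := hZ.1.ae_eq_mk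
  have hZ'm : Measurable Z' := hZ.1.stronglyMeasurable_mk.measurable
  have hZ' : Integrable Z' μ := hZ.congr hae
  have hVaR : VaR μ Z = VaR μ Z' := by
    funext s
    unfold VaR
    congr 1
    ext z
    have : μ {ω | Z ω ≤ z} = μ {ω | Z' ω ≤ z} := by
      apply measure_congr
      filter_upwards [hae] with ω h
      change (Z ω ≤ z) = (Z' ω ≤ z)
      rw [h]
    change (s ≤ (μ {ω | Z ω ≤ z}).toReal) ↔ (s ≤ (μ {ω | Z' ω ≤ z}).toReal)
    rw [this]
  have hES : ES μ Z ((b - 1) / (b - a)) = ES μ Z' ((b - 1) / (b - a)) := by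
    rw [ES, ES, hVaR]
  have hInt : ∫ ω, Z ω ∂μ = ∫ ω, Z' ω ∂μ := integral_congr_ae hae
  have hLHS : ∀ ζ : ℝ,
      (∫ ω, (a * max (-(Z ω) + ζ) 0 - b * max (-(-(Z ω) + ζ)) 0) ∂μ)
        = ∫ ω, (a * max (-(Z' ω) + ζ) 0 - b * max (-(-(Z' ω) + ζ)) 0) ∂μ := by
    intro ζ
    apply integral_congr_ae
    filter_upwards [hae] with ω h
    rw [h]
  calc (⨅ ζ : ℝ, (ζ - ∫ ω, (a * max (-(Z ω) + ζ) 0 - b * max (-(-(Z ω) + ζ)) 0) ∂μ))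
      = ⨅ ζ : ℝ, (ζ - ∫ ω, (a * max (-(Z' ω) + ζ) 0 - b * max (-(-(Z' ω) + ζ)) 0) ∂μ) := by
        apply iInf_congr; intro ζ; rw [hLHS ζ]
    _ = a * (∫ ω, Z' ω ∂μ) + (1 - a) * ES μ Z' ((b - 1) / (b - a)) :=
        oce_meas μ Z' hZ'm hZ' a b ha hab hb
    _ = a * (∫ ω, Z ω ∂μ) + (1 - a) * ES μ Z ((b - 1) / (b - a)) := by
        rw [hInt, hES]
end
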